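/- arXiv:2601.00409 — 10 statements merged into one kernel-verified Lean document; each statement's English description precedes it below -/
import Mathlib

section
/- Fix an integer N ≥ 1 and let A, B ∈ ℂ^{N×N} be positive semidefinite. Then the matrix convolution A ⋄ B is positive semidefinite. -/
open Matrix ComplexOrder

/-- The matrix convolution (Jury product): with 0-based indices,
`(A ⋄ B) i j = ∑_{k ≤ i} ∑_{l ≤ j} A k l * B (i-k) (j-l)`
(the 1-based formula `(A⋄B)_{ij} = Σ_{k=1}^i Σ_{l=1}^j a_{kl} b_{i−k+1,j−l+1}`). -/
noncomputable def matConv {N : ℕ} (A B : Matrix (Fin N) (Fin N) ℂ) :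
    Matrix (Fin N) (Fin N) ℂ :=
  Matrix.of fun i j => ∑ k : Fin N, ∑ l : Fin N,
    if k.1 ≤ i.1 ∧ l.1 ≤ j.1 then A k l * B (i - k) (j - l) else 0

section aux
variable {N : ℕ} [NeZero N]

lemma fin_val_add_of_lt {k m : Fin N} (h : k.1 + m.1 < N) :
    ((k + m : Fin N) : ℕ) = k.1 + m.1 := by
  rw [Fin.val_add, Nat.mod_eq_of_lt h]

lemma fin_val_add_of_ge {k m : Fin N} (h : N ≤ k.1 + m.1) :
    ((k + m : Fin N) : ℕ) = k.1 + m.1 - N := by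
  have h2 : k.1 + m.1 - N < N := by have := k.2; have := m.2; omega
  rw [Fin.val_add, Nat.mod_eq_sub_mod h, Nat.mod_eq_of_lt h2]

lemma fin_le_val_add_iff (k m : Fin N) :
    k.1 ≤ ((k + m : Fin N) : ℕ) ↔ k.1 + m.1 < N := by
  rcases lt_or_ge (k.1 + m.1) N with h | h
  · rw [fin_val_add_of_lt h]; omega
  · rw [fin_val_add_of_ge h]; have := m.2; omega

/-- reorder/shift equiv on quadruples. -/
def e1 (N : ℕ) [NeZero N] :
    (Fin N × Fin N × Fin N × Fin N) ≃ (Fin N × Fin N × Fin N × Fin N) where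
  toFun := fun t => (t.1 + t.2.2.1, t.2.1 + t.2.2.2, t.1, t.2.1)
  invFun := fun t => (t.2.2.1, t.2.2.2, t.1 - t.2.2.1, t.2.1 - t.2.2.2)
  left_inv := by rintro ⟨k, l, m, n⟩; simp
  right_inv := by rintro ⟨i, j, k, l⟩; simp

/-- rotation equiv on quintuples. -/
def e2 (N : ℕ) :
    (Fin N × Fin N × Fin N × Fin N × Fin N) ≃ (Fin N × Fin N × Fin N × Fin N × Fin N) where
  toFun := fun t => (t.2.1, t.2.2.1, t.2.2.2.1, t.2.2.2.2, t.1)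
  invFun := fun t => (t.2.2.2.2, t.1, t.2.1, t.2.2.1, t.2.2.2.1)
  left_inv := by rintro ⟨q, k, l, m, n⟩; rfl
  right_inv := by rintro ⟨k, l, m, n, q⟩; rfl

end aux

/-- the matrix convolution of positive semidefinite matrices is
positive semidefinite. -/
theorem matConv_posSemidef (N : ℕ) (hN : 1 ≤ N)
    (A B : Matrix (Fin N) (Fin N) ℂ) (hA : A.PosSemidef) (hB : B.PosSemidef) :
    (matConv A B).PosSemidef := by
  haveI : NeZero N := ⟨by omega⟩
  have hA' : ∀ a b, star (A a b) = A b a := fun a b => congrFun (congrFun hA.1 b) a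
  have hB' : ∀ a b, star (B a b) = B b a := fun a b => congrFun (congrFun hB.1 b) a
  obtain ⟨D, hD⟩ : ∃ D : Matrix (Fin N) (Fin N) ℂ, B = Dᴴ * D := by
    open scoped MatrixOrder Matrix.Norms.L2Operator in
    exact CStarAlgebra.nonneg_iff_eq_star_mul_self.mp hB.nonneg
  have hBe : ∀ m n, B m n = ∑ q, star (D q m) * D q n := by
    intro m n; rw [hD]; simp [Matrix.mul_apply, conjTranspose_apply]
  rw [posSemidef_iff_dotProduct_mulVec]
  constructor
  · ext i j
    simp only [conjTranspose_apply, matConv, of_apply, star_sum]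
    rw [Finset.sum_comm]
    refine Finset.sum_congr rfl fun k _ => Finset.sum_congr rfl fun l _ => ?_
    rw [apply_ite (star : ℂ → ℂ), star_zero, star_mul', hA', hB']
    exact if_congr and_comm rfl rfl
  · intro x
    set Y : Fin N → Fin N → ℂ := fun k m => if k.1 + m.1 < N then x (k + m) else 0 with hY
    set v : Fin N → Fin N → ℂ := fun q k => ∑ m, D q m * Y k m with hv
    have key : star x ⬝ᵥ (matConv A B *ᵥ x) = ∑ q, star (v q) ⬝ᵥ (A *ᵥ v q) := by
      calc star x ⬝ᵥ (matConv A B *ᵥ x)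
          = ∑ t : Fin N × Fin N × Fin N × Fin N,
              (if t.2.2.1.1 ≤ t.1.1 ∧ t.2.2.2.1 ≤ t.2.1.1 then
                star (x t.1) * (A t.2.2.1 t.2.2.2 * B (t.1 - t.2.2.1) (t.2.1 - t.2.2.2) * x t.2.1)
              else 0) := by
            simp only [dotProduct, mulVec, matConv, of_apply, Fintype.sum_prod_type,
              Finset.mul_sum, Finset.sum_mul, mul_ite, ite_mul, mul_zero, zero_mul, Pi.star_apply]
        _ = ∑ t : Fin N × Fin N × Fin N × Fin N,
              (A t.1 t.2.1 * B t.2.2.1 t.2.2.2 * (star (Y t.1 t.2.2.1) * Y t.2.1 t.2.2.2)) := by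
            refine (Fintype.sum_equiv (e1 N) _ _ ?_).symm
            rintro ⟨k, l, m, n⟩
            simp only [e1, Equiv.coe_fn_mk, hY]
            simp only [fin_le_val_add_iff, add_sub_cancel_left]
            by_cases h1 : k.1 + m.1 < N <;> by_cases h2 : l.1 + n.1 < N <;>
              simp [h1, h2] <;> ring
        _ = ∑ t : Fin N × Fin N × Fin N × Fin N × Fin N,
              ((star (D t.2.2.2.2 t.2.2.1) * star (Y t.1 t.2.2.1)) *
                (A t.1 t.2.1 * (D t.2.2.2.2 t.2.2.2.1 * Y t.2.1 t.2.2.2.1))) := by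
            simp only [Fintype.sum_prod_type, hBe, Finset.sum_mul, Finset.mul_sum]
            refine Finset.sum_congr rfl fun k _ => Finset.sum_congr rfl fun l _ =>
              Finset.sum_congr rfl fun m _ => Finset.sum_congr rfl fun n _ =>
              Finset.sum_congr rfl fun q _ => ?_
            ring
        _ = ∑ t : Fin N × Fin N × Fin N × Fin N × Fin N,
              ((star (D t.1 t.2.2.2.1) * star (Y t.2.1 t.2.2.2.1)) *
                (A t.2.1 t.2.2.1 * (D t.1 t.2.2.2.2 * Y t.2.2.1 t.2.2.2.2))) := by
            exact (Fintype.sum_equiv (e2 N) _ _ (by rintro ⟨q, k, l, m, n⟩; rfl)).symm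
        _ = ∑ q, star (v q) ⬝ᵥ (A *ᵥ v q) := by
            simp only [dotProduct, mulVec, hv, Pi.star_apply, Fintype.sum_prod_type, star_sum,
              star_mul', Finset.sum_mul, Finset.mul_sum]
            refine Finset.sum_congr rfl fun q _ => Finset.sum_congr rfl fun k _ =>
              Finset.sum_congr rfl fun l _ => ?_
            exact Finset.sum_comm
    rw [key]
    exact Finset.sum_nonneg fun q _ => hA.dotProduct_mulVec_nonneg (v q)
end

section
/- Fix integers β, n ≥ 1 and nonzero matrices A, B ∈ ℂ^{n×β}. Then AA* ∘ BB* ≽ (1/min(rk AA*, rk BB*)) · d_{AB^T} d_{AB^T}* ≽ 0, where d_{AB^T} ∈ ℂ^n is the column vector of diagonal entries of AB^T. -/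
open Matrix ComplexOrder

set_option maxHeartbeats 1000000 in
private lemma nvk_cs_sum {ι : Type*} (s : Finset ι) (a : ι → ℂ) :
    Complex.normSq (∑ t ∈ s, a t) ≤ s.card * ∑ t ∈ s, Complex.normSq (a t) := by
  have h1 : ‖∑ t ∈ s, a t‖ ≤ ∑ t ∈ s, ‖a t‖ := by
    simpa using norm_sum_le s a
  calc Complex.normSq (∑ t ∈ s, a t) = (‖∑ t ∈ s, a t‖)^2 := (Complex.sq_norm _).symm
    _ ≤ (∑ t ∈ s, ‖a t‖)^2 := by apply pow_le_pow_left₀ (by positivity) h1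
    _ ≤ s.card * ∑ t ∈ s, (‖a t‖)^2 := sq_sum_le_card_mul_sum_sq
    _ = s.card * ∑ t ∈ s, Complex.normSq (a t) := by simp [Complex.sq_norm]

set_option maxHeartbeats 1000000 in
private lemma nvk_cs_prod {ι : Type*} (s : Finset ι) (c u : ι → ℂ) :
    Complex.normSq (∑ k ∈ s, c k * u k) ≤
      (∑ k ∈ s, Complex.normSq (c k)) * (∑ k ∈ s, Complex.normSq (u k)) := by
  have h1 : ‖∑ k ∈ s, c k * u k‖ ≤ ∑ k ∈ s, ‖c k‖ * ‖u k‖ := by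
    simpa [norm_mul] using norm_sum_le s (fun k => c k * u k)
  calc Complex.normSq (∑ k ∈ s, c k * u k) = (‖∑ k ∈ s, c k * u k‖)^2 :=
        (Complex.sq_norm _).symm
    _ ≤ (∑ k ∈ s, ‖c k‖ * ‖u k‖)^2 := by
        apply pow_le_pow_left₀ (by positivity) h1
    _ ≤ (∑ k ∈ s, (‖c k‖)^2) * (∑ k ∈ s, (‖u k‖)^2) :=
        Finset.sum_mul_sq_le_sq_mul_sq s _ _
    _ = _ := by simp [Complex.sq_norm]

set_option maxHeartbeats 1000000 in
private lemma nvk_trace_sq_le_card_mul {ι κ : Type*} [Fintype ι] [Fintype κ] [DecidableEq κ]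
    (U : Matrix ι κ ℂ) (C : Matrix κ ι ℂ) (hU : Uᴴ * U = 1) :
    Complex.normSq ((U * C).trace) ≤
      (Fintype.card κ) * ((U * C)ᴴ * (U * C)).trace.re := by
  have hcol : ∀ t, ∑ k, Complex.normSq (U k t) = 1 := by
    intro t
    have := congrArg Complex.re (congrFun (congrFun hU t) t)
    simpa [Matrix.mul_apply, Matrix.conjTranspose_apply, Matrix.one_apply,
      Complex.re_sum, Complex.normSq_apply, Complex.mul_re] using this
  have htr : (U * C).trace = ∑ t, ∑ k, C t k * U k t := by
    rw [Matrix.trace_mul_comm]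
    simp [Matrix.trace, Matrix.mul_apply, Matrix.diag]
  have hrhs : ((U * C)ᴴ * (U * C)).trace.re = ∑ t, ∑ k, Complex.normSq (C t k) := by
    have h2 : (U * C)ᴴ * (U * C) = Cᴴ * C := by
      rw [Matrix.conjTranspose_mul, Matrix.mul_assoc, ← Matrix.mul_assoc Uᴴ U C, hU,
        Matrix.one_mul]
    rw [h2]
    rw [Finset.sum_comm]
    simp [Matrix.trace, Matrix.mul_apply, Matrix.diag, Complex.re_sum, Complex.normSq_apply,
      Complex.mul_re, Matrix.conjTranspose_apply]
  rw [htr, hrhs]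
  calc Complex.normSq (∑ t, ∑ k, C t k * U k t)
      ≤ (Finset.univ : Finset κ).card * ∑ t, Complex.normSq (∑ k, C t k * U k t) :=
        nvk_cs_sum _ _
    _ ≤ (Fintype.card κ) * ∑ t, ∑ k, Complex.normSq (C t k) := by
        rw [Finset.card_univ]
        apply mul_le_mul_of_nonneg_left _ (by positivity)
        apply Finset.sum_le_sum
        intro t _
        calc Complex.normSq (∑ k, C t k * U k t)
            ≤ (∑ k, Complex.normSq (C t k)) * (∑ k, Complex.normSq (U k t)) := nvk_cs_prod _ _ _
          _ = ∑ k, Complex.normSq (C t k) := by rw [hcol t, mul_one]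

set_option maxHeartbeats 1000000 in
private lemma nvk_exists_iso_matrix {ι κ : Type*} [Fintype ι] [Fintype κ] (F : Matrix ι κ ℂ) :
    ∃ (r : ℕ) (U : Matrix ι (Fin r) ℂ), r = F.rank ∧ Uᴴ * U = 1 ∧
      ∀ y : κ → ℂ, U *ᵥ (Uᴴ *ᵥ (F *ᵥ y)) = F *ᵥ y := by
  classical
  let L := WithLp.linearEquiv 2 ℂ (ι → ℂ)
  let W : Submodule ℂ (EuclideanSpace ℂ ι) :=
    (LinearMap.range F.mulVecLin).map (L.symm : (ι → ℂ) →ₗ[ℂ] EuclideanSpace ℂ ι)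
  have hdim : Module.finrank ℂ W = F.rank := by
    rw [LinearEquiv.finrank_map_eq]; rfl
  let b := stdOrthonormalBasis ℂ W
  let u : Fin (Module.finrank ℂ W) → (ι → ℂ) := fun t => L ((b t : EuclideanSpace ℂ ι))
  have hu : ∀ t i, u t i = (b t : EuclideanSpace ℂ ι) i := fun t i => rfl
  refine ⟨_, Matrix.of (fun i t => u t i), hdim, ?_, ?_⟩
  · ext t s
    have horth := b.orthonormal
    rw [orthonormal_iff_ite] at horth
    have h := horth t s
    rw [Submodule.coe_inner, PiLp.inner_apply] at h
    simp only [RCLike.inner_apply] at h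
    simp only [Matrix.mul_apply, Matrix.conjTranspose_apply, Matrix.one_apply, Matrix.of_apply]
    rw [← h]
    exact Finset.sum_congr rfl (fun _ _ => mul_comm _ _)
  · intro y
    have hvW : (L.symm (F *ᵥ y) : EuclideanSpace ℂ ι) ∈ W :=
      Submodule.mem_map_of_mem ⟨y, rfl⟩
    set w : W := ⟨L.symm (F *ᵥ y), hvW⟩ with hw
    have hrepr := b.sum_repr w
    have h1 : (↑(∑ t, b.repr w t • b t) : EuclideanSpace ℂ ι) = L.symm (F *ᵥ y) :=
      congrArg Subtype.val hrepr
    rw [AddSubmonoidClass.coe_finset_sum] at h1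
    have h2 := congrArg L h1
    rw [map_sum] at h2
    simp only [LinearEquiv.apply_symm_apply] at h2
    funext i
    have h3 := congrFun h2 i
    have hrw : ∀ t, b.repr w t = ∑ l, (starRingEnd ℂ) (u t l) * (F *ᵥ y) l := by
      intro t
      rw [b.repr_apply_apply, Submodule.coe_inner, PiLp.inner_apply]
      simp only [RCLike.inner_apply]
      exact Finset.sum_congr rfl (fun _ _ => mul_comm _ _)
    have h5 : ∑ t, b.repr w t • u t = F *ᵥ y := by
      rw [← h2]
      apply Finset.sum_congr rfl
      intro t _
      rw [show ((b.repr w t • b t : W) : EuclideanSpace ℂ ι)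
          = b.repr w t • (b t : EuclideanSpace ℂ ι) from rfl]
      rw [_root_.map_smul]
    have hstar : ∀ t, (∑ l, star (u t l) * ∑ k, F l k * y k) = b.repr w t := by
      intro t
      rw [hrw t]
      rfl
    show (Matrix.of (fun i t => u t i) *ᵥ ((Matrix.of (fun i t => u t i))ᴴ *ᵥ (F *ᵥ y))) i
        = (F *ᵥ y) i
    simp only [Matrix.mulVec, dotProduct, Matrix.conjTranspose_apply, Matrix.of_apply]
    calc ∑ t, u t i * ∑ l, star (u t l) * ∑ k, F l k * y k
        = ∑ t, (b.repr w t • u t) i := by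
          apply Finset.sum_congr rfl
          intro t _
          rw [hstar t]
          exact mul_comm _ _
      _ = (∑ t, b.repr w t • u t) i := by rw [← Finset.sum_apply]
      _ = (F *ᵥ y) i := by rw [h5]

set_option maxHeartbeats 1000000 in
private lemma nvk_trace_sq_le_rank_mul {ι κ : Type*} [Fintype ι] [Fintype κ]
    (F : Matrix ι κ ℂ) (G : Matrix κ ι ℂ) :
    Complex.normSq ((F * G).trace) ≤ F.rank * ((F * G)ᴴ * (F * G)).trace.re := by
  obtain ⟨r, U, hr, hUU, hproj⟩ := nvk_exists_iso_matrix F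
  have hfact : U * (Uᴴ * (F * G)) = F * G := by
    ext i j
    exact congrFun (hproj (fun k => G k j)) i
  have := nvk_trace_sq_le_card_mul U (Uᴴ * (F * G)) hUU
  rw [hfact] at this
  simpa [hr] using this

set_option maxHeartbeats 1000000 in
private lemma nvk_rank_pos_of_ne_zero {ι κ : Type*} [Fintype ι] [Fintype κ] [DecidableEq κ]
    {A : Matrix ι κ ℂ} (hA : A ≠ 0) : 0 < A.rank := by
  rw [pos_iff_ne_zero]
  intro h
  apply hA
  have h0 : Module.finrank ℂ (LinearMap.range A.mulVecLin) = 0 := h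
  rw [Submodule.finrank_eq_zero, LinearMap.range_eq_bot] at h0
  ext i j
  have h2 := congrFun (LinearMap.congr_fun h0 (Pi.single j 1)) i
  simpa [Matrix.mulVecLin_apply, Matrix.mulVec_single] using h2

set_option maxHeartbeats 1000000 in
private lemma nvk_dot_outer {ι : Type*} [Fintype ι] (v x : ι → ℂ) :
    star x ⬝ᵥ ((vecMulVec v (star v)) *ᵥ x) = (star x ⬝ᵥ v) * star (star x ⬝ᵥ v) := by
  simp only [dotProduct, Matrix.mulVec, Matrix.vecMulVec_apply, Pi.star_apply,
    star_sum, star_mul', star_star]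
  rw [Finset.sum_mul_sum]
  apply Finset.sum_congr rfl
  intro i _
  rw [Finset.mul_sum]
  apply Finset.sum_congr rfl
  intro j _
  ring

set_option maxHeartbeats 1000000 in
private lemma nvk_outer_posSemidef {ι : Type*} [Fintype ι] (v : ι → ℂ) :
    (vecMulVec v (star v)).PosSemidef := by
  rw [posSemidef_iff_dotProduct_mulVec]
  constructor
  · ext i j
    simp [Matrix.conjTranspose_apply, Matrix.vecMulVec_apply, mul_comm]
  · intro x
    rw [nvk_dot_outer, mul_comm]
    exact star_mul_self_nonneg _

set_option maxHeartbeats 1000000 in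
private lemma nvk_trace_hadamard_eq {ι κ : Type*} [Fintype ι] [Fintype κ] [DecidableEq ι]
    (A B : Matrix ι κ ℂ) (x : ι → ℂ) :
    (diagonal (star x) * (A*Aᴴ) * ((B*Bᴴ) * diagonal x)ᵀ).trace
    = ((Aᵀ * (diagonal (star x) * B))ᴴ * (Aᵀ * (diagonal (star x) * B))).trace := by
  have hD : (diagonal (star x))ᴴ = diagonal x := by
    rw [Matrix.diagonal_conjTranspose, star_star]
  have hTH : (Aᵀ)ᴴ = (Aᴴ)ᵀ := by ext i j; simp
  rw [show ((Aᵀ * (diagonal (star x) * B))ᴴ * (Aᵀ * (diagonal (star x) * B)))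
      = (Bᴴ * (diagonal x * ((Aᴴ)ᵀ * (Aᵀ * (diagonal (star x) * B))))) from by
    simp only [Matrix.conjTranspose_mul, hD, hTH, Matrix.mul_assoc]]
  rw [← Matrix.trace_transpose (Bᴴ * (diagonal x * ((Aᴴ)ᵀ * (Aᵀ * (diagonal (star x) * B)))))]
  simp only [Matrix.transpose_mul, Matrix.transpose_transpose, Matrix.diagonal_transpose,
    Matrix.mul_assoc]
  rw [Matrix.trace_mul_comm Bᵀ]
  simp only [Matrix.mul_assoc]

/-- Novak–Vybíral–Khare: for nonzero `A B : ℂ^{n×β}`,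
`AA* ∘ BB* ≽ (1/min(rk AA*, rk BB*)) d d* ≽ 0` where `d` is the diagonal of `ABᵀ`. -/
theorem hadamard_loewner_lower_bound (n β : ℕ) (hn : 1 ≤ n) (hβ : 1 ≤ β)
    (A B : Matrix (Fin n) (Fin β) ℂ) (hA : A ≠ 0) (hB : B ≠ 0) :
    (Matrix.hadamard (A * Aᴴ) (B * Bᴴ) -
        (((min (A * Aᴴ).rank (B * Bᴴ).rank : ℕ) : ℂ))⁻¹ •
          vecMulVec (fun i : Fin n => (A * Bᵀ) i i)
            (star fun i : Fin n => (A * Bᵀ) i i)).PosSemidef ∧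
    (vecMulVec (fun i : Fin n => (A * Bᵀ) i i)
        (star fun i : Fin n => (A * Bᵀ) i i)).PosSemidef := by
  set d : Fin n → ℂ := fun i => (A * Bᵀ) i i with hd
  set m : ℕ := min (A * Aᴴ).rank (B * Bᴴ).rank with hm
  have hmpos : 0 < m := by
    apply lt_min
    · rw [Matrix.rank_self_mul_conjTranspose]; exact nvk_rank_pos_of_ne_zero hA
    · rw [Matrix.rank_self_mul_conjTranspose]; exact nvk_rank_pos_of_ne_zero hB
  have houter := nvk_outer_posSemidef d
  refine ⟨posSemidef_iff_dotProduct_mulVec.mpr ⟨?_, ?_⟩, houter⟩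
  · -- Hermitian
    apply Matrix.IsHermitian.sub
    · have hX := Matrix.isHermitian_mul_conjTranspose_self A
      have hY := Matrix.isHermitian_mul_conjTranspose_self B
      show _ᴴ = _
      ext i j
      simp only [Matrix.conjTranspose_apply, Matrix.hadamard_apply, star_mul']
      rw [← Matrix.conjTranspose_apply (A * Aᴴ), ← Matrix.conjTranspose_apply (B * Bᴴ), hX, hY]
    · show _ᴴ = _
      rw [Matrix.conjTranspose_smul, houter.1]
      congr 1
      simp
  · -- quadratic form
    intro x
    set D : Matrix (Fin n) (Fin n) ℂ := diagonal (star x) with hD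
    set T : Matrix (Fin β) (Fin β) ℂ := Aᵀ * (D * B) with hT
    set S : ℝ := ∑ c, ∑ k, Complex.normSq (T k c) with hS
    have hE : (Tᴴ * T).trace = (S : ℂ) := by
      rw [hS]
      push_cast
      simp only [Matrix.trace, Matrix.diag, Matrix.mul_apply, Matrix.conjTranspose_apply]
      apply Finset.sum_congr rfl
      intro c _
      apply Finset.sum_congr rfl
      intro k _
      exact Complex.normSq_eq_conj_mul_self.symm
    -- the quadratic form of the hadamard part
    have hQ : star x ⬝ᵥ (Matrix.hadamard (A * Aᴴ) (B * Bᴴ) *ᵥ x) = (Tᴴ * T).trace := by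
      rw [Matrix.dotProduct_mulVec, Matrix.dotProduct_vecMul_hadamard]
      exact nvk_trace_hadamard_eq A B x
    -- diagonal vector and trace
    have hDB : ∀ i k, (D * B) i k = star (x i) * B i k := fun i k =>
      Matrix.diagonal_mul (star x) B i k
    have hs : star x ⬝ᵥ d = T.trace := by
      have htr2 : T.trace = ∑ c, ∑ i, A i c * (star (x i) * B i c) := by
        simp only [Matrix.trace, Matrix.diag, hT, Matrix.mul_apply, Matrix.transpose_apply, hDB]
      rw [htr2, Finset.sum_comm]
      simp only [dotProduct, hd, Matrix.mul_apply, Matrix.transpose_apply, Pi.star_apply,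
        Finset.mul_sum]
      apply Finset.sum_congr rfl
      intro i _
      apply Finset.sum_congr rfl
      intro c _
      ring
    -- the two rank bounds
    have hb1 : Complex.normSq (T.trace) ≤ ((A * Aᴴ).rank : ℝ) * S := by
      have h := nvk_trace_sq_le_rank_mul Aᵀ (D * B)
      rw [← hT] at h
      rw [hE] at h
      rw [Complex.ofReal_re] at h
      rw [Matrix.rank_transpose, ← Matrix.rank_self_mul_conjTranspose] at h
      exact h
    have hb2 : Complex.normSq (T.trace) ≤ ((B * Bᴴ).rank : ℝ) * S := by
      have h := nvk_trace_sq_le_rank_mul Bᴴ (Dᴴ * (Aᵀ)ᴴ)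
      have hfact : Bᴴ * (Dᴴ * (Aᵀ)ᴴ) = Tᴴ := by
        rw [hT, Matrix.conjTranspose_mul, Matrix.conjTranspose_mul]
        rw [Matrix.mul_assoc]
      rw [hfact] at h
      rw [Matrix.trace_conjTranspose] at h
      rw [Matrix.conjTranspose_conjTranspose, Matrix.trace_mul_comm T Tᴴ, hE] at h
      rw [Complex.ofReal_re] at h
      rw [Matrix.rank_conjTranspose, ← Matrix.rank_self_mul_conjTranspose] at h
      simpa [Complex.normSq_conj] using h
    have hkey : Complex.normSq (T.trace) ≤ (m : ℝ) * S := by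
      rcases le_total ((A * Aᴴ).rank) ((B * Bᴴ).rank) with h | h
      · rw [hm, min_eq_left h]; exact hb1
      · rw [hm, min_eq_right h]; exact hb2
    -- assemble
    rw [Matrix.sub_mulVec, dotProduct_sub, Matrix.smul_mulVec,
      dotProduct_smul]
    rw [hQ, nvk_dot_outer, hs, hE]
    have hmc : T.trace * star T.trace = (Complex.normSq T.trace : ℂ) := by
      rw [show star T.trace = (starRingEnd ℂ) T.trace from rfl, Complex.mul_conj]
    rw [hmc]
    rw [show ((m : ℂ))⁻¹ • ((Complex.normSq T.trace : ℝ) : ℂ)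
        = ((((m : ℝ))⁻¹ * Complex.normSq T.trace : ℝ) : ℂ) from by push_cast; simp [smul_eq_mul]]
    rw [← Complex.ofReal_sub]
    rw [Complex.zero_le_real]
    rw [sub_nonneg]
    rw [inv_mul_le_iff₀ (by exact_mod_cast hmpos)]
    exact hkey
end

section
/- For all integers n, β ≥ 1 and every integer r with 1 ≤ r ≤ min(n, β), there exist matrices A, B ∈ ℂ^{n×β} with rk(AA*) = rk(BB*) = r and a vector u ∈ ℂ^n such that u*(AA* ∘ BB*)u = (1/r)·|d_{AB^T}* u|² and this common value is nonzero. In particular, the coefficient 1/min(rk AA*, rk BB*) in the lower bound AA* ∘ BB* ≽ (1/min(rk AA*, rk BB*)) d_{AB^T} d_{AB^T}* cannot be replaced by any larger constant uniformly over all A, B. -/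
open Matrix ComplexOrder

/-- sharpness of the constant `1/min(rk AA*, rk BB*)` in the
Hadamard-product lower bound: for each `1 ≤ r ≤ min n β` there are `A, B` of the
corresponding ranks and a vector `u` attaining equality with nonzero value. -/
theorem hadamard_lower_bound_sharp (n β r : ℕ) (hn : 1 ≤ n) (hβ : 1 ≤ β)
    (hr : 1 ≤ r) (hrm : r ≤ min n β) :
    ∃ (A B : Matrix (Fin n) (Fin β) ℂ) (u : Fin n → ℂ),
      (A * Aᴴ).rank = r ∧ (B * Bᴴ).rank = r ∧
      star u ⬝ᵥ (Matrix.hadamard (A * Aᴴ) (B * Bᴴ)).mulVec u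
        = ((r : ℂ))⁻¹ * ((‖(star fun i : Fin n => (A * Bᵀ) i i) ⬝ᵥ u‖ ^ 2 : ℝ) : ℂ) ∧
      star u ⬝ᵥ (Matrix.hadamard (A * Aᴴ) (B * Bᴴ)).mulVec u ≠ 0 := by
  obtain ⟨hrn, hrβ⟩ := le_min_iff.mp hrm
  set A : Matrix (Fin n) (Fin β) ℂ :=
    fun i j => if (i : ℕ) = (j : ℕ) ∧ (i : ℕ) < r then 1 else 0 with hA
  set d : Fin n → ℂ := fun i => if (i : ℕ) < r then 1 else 0 with hd
  -- equivalence giving cardinality r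
  have e : {i : Fin n // (i : ℕ) < r} ≃ Fin r :=
    { toFun := fun x => ⟨(x.1 : ℕ), x.2⟩
      invFun := fun j => ⟨⟨(j : ℕ), lt_of_lt_of_le j.2 hrn⟩, j.2⟩
      left_inv := fun x => by ext; simp
      right_inv := fun j => by ext; simp }
  have hfilter : (Finset.univ.filter (fun i : Fin n => (i : ℕ) < r)).card = r := by
    rw [← Fintype.card_subtype, Fintype.card_congr e, Fintype.card_fin]
  have key : ∀ i k : Fin n,
      (∑ j : Fin β, A i j * star (A k j)) = if i = k then d i else 0 := by
    intro i k
    by_cases h : (i : ℕ) < r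
    · have hiβ : (i : ℕ) < β := lt_of_lt_of_le h hrβ
      rw [Finset.sum_eq_single ⟨(i : ℕ), hiβ⟩]
      · simp only [hA, hd]
        by_cases hik : i = k
        · subst hik; simp [h]
        · have hne : (i : ℕ) ≠ (k : ℕ) := fun hc => hik (Fin.ext hc)
          simp [h, hne, Ne.symm hne, hik]
      · intro j _ hj
        have hne : (i : ℕ) ≠ (j : ℕ) := by
          intro hc; exact hj (by apply Fin.ext; simp [← hc])
        simp [hA, hne]
      · intro hmem; exact absurd (Finset.mem_univ _) hmem
    · have h0 : ∀ j : Fin β, A i j = 0 := by intro j; simp [hA, h]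
      simp [h0, hd, h]
  have hAA : A * Aᴴ = Matrix.diagonal d := by
    ext i k
    simp only [Matrix.mul_apply, Matrix.conjTranspose_apply, Matrix.diagonal_apply]
    rw [key i k]
  have hcard : Fintype.card {i : Fin n // d i ≠ 0} = r := by
    have e2 : {i : Fin n // d i ≠ 0} ≃ {i : Fin n // (i : ℕ) < r} :=
      Equiv.subtypeEquivRight (fun i => by
        by_cases h : (i : ℕ) < r <;> simp [hd, h])
    rw [Fintype.card_congr e2, Fintype.card_subtype, hfilter]
  have hrank : (A * Aᴴ).rank = r := by
    rw [hAA, Matrix.rank_diagonal, hcard]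
  have hsum : (∑ i : Fin n, d i) = (r : ℂ) := by
    simp only [hd, Finset.sum_boole, hfilter]
  -- diagonal of A * Bᵀ
  have hdiagAB : ∀ i : Fin n, (A * Aᵀ) i i = d i := by
    intro i
    have : (∑ j : Fin β, A i j * A i j) = if i = i then d i else 0 := by
      have hstar : ∀ j, star (A i j) = A i j := by
        intro j; simp only [hA]; by_cases h : (i : ℕ) = (j : ℕ) ∧ (i : ℕ) < r <;> simp [h]
      rw [← key i i]; exact Finset.sum_congr rfl fun j _ => by rw [hstar]
    simpa [Matrix.mul_apply, Matrix.transpose_apply] using this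
  refine ⟨A, A, fun _ => 1, hrank, hrank, ?_, ?_⟩
  · have hLHS : star (fun _ : Fin n => (1 : ℂ)) ⬝ᵥ
        (Matrix.hadamard (A * Aᴴ) (A * Aᴴ)).mulVec (fun _ => 1) = (r : ℂ) := by
      rw [hAA]
      have hdd : ∀ i, d i * d i = d i := by
        intro i; simp only [hd]; by_cases h : (i : ℕ) < r <;> simp [h]
      simp only [dotProduct, Matrix.mulVec, dotProduct,
        Matrix.hadamard_apply, Matrix.diagonal_apply, Pi.star_apply, star_one, one_mul, mul_one]
      calc (∑ i : Fin n, ∑ j : Fin n,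
              (if i = j then d i else 0) * (if i = j then d i else 0))
          = ∑ i : Fin n, d i := by
            refine Finset.sum_congr rfl fun i _ => ?_
            rw [Finset.sum_eq_single i]
            · simp [hdd]
            · intro b _ hb
              simp [Ne.symm hb]
            · intro hmem; exact absurd (Finset.mem_univ _) hmem
        _ = (r : ℂ) := hsum
    have hdot : (star fun i : Fin n => (A * Aᵀ) i i) ⬝ᵥ (fun _ : Fin n => (1 : ℂ))
        = (r : ℂ) := by
      simp only [dotProduct, Pi.star_apply, mul_one]
      rw [← hsum]
      refine Finset.sum_congr rfl fun i _ => ?_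
      rw [hdiagAB i]
      simp only [hd]; by_cases h : (i : ℕ) < r <;> simp [h]
    rw [hLHS, hdot]
    have hnorm : ‖(r : ℂ)‖ = (r : ℝ) := by
      simp [Complex.norm_natCast]
    rw [hnorm]
    have hr0 : (r : ℂ) ≠ 0 := Nat.cast_ne_zero.mpr (by omega)
    push_cast
    field_simp
  · have hLHS : star (fun _ : Fin n => (1 : ℂ)) ⬝ᵥ
        (Matrix.hadamard (A * Aᴴ) (A * Aᴴ)).mulVec (fun _ => 1) = (r : ℂ) := by
      rw [hAA]
      have hdd : ∀ i, d i * d i = d i := by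
        intro i; simp only [hd]; by_cases h : (i : ℕ) < r <;> simp [h]
      simp only [dotProduct, Matrix.mulVec, dotProduct,
        Matrix.hadamard_apply, Matrix.diagonal_apply, Pi.star_apply, star_one, one_mul, mul_one]
      calc (∑ i : Fin n, ∑ j : Fin n,
              (if i = j then d i else 0) * (if i = j then d i else 0))
          = ∑ i : Fin n, d i := by
            refine Finset.sum_congr rfl fun i _ => ?_
            rw [Finset.sum_eq_single i]
            · simp [hdd]
            · intro b _ hb
              simp [Ne.symm hb]
            · intro hmem; exact absurd (Finset.mem_univ _) hmem
        _ = (r : ℂ) := hsum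
    rw [hLHS]
    exact Nat.cast_ne_zero.mpr (by omega)
end

section
/- Let m, n, β ≥ 1 be integers. Then for nonzero matrices A ∈ ℂ^{m×β} and B ∈ ℂ^{n×β}, one has AA* ⊗ BB* ≽ (1/min(rk AA*, rk BB*)) · vec(BA^T) vec(BA^T)* ≽ 0. -/
open Matrix Kronecker ComplexOrder

lemma matrix_rank_pos {m n : ℕ} {A : Matrix (Fin m) (Fin n) ℂ} (hA : A ≠ 0) : 0 < A.rank := by
  rw [pos_iff_ne_zero]
  intro h0
  apply hA
  rw [Matrix.rank] at h0
  have hbot : LinearMap.range A.mulVecLin = ⊥ := Submodule.finrank_eq_zero.mp h0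
  ext i j
  have h1 : A.mulVecLin (Pi.single j 1) = 0 := by
    have : A.mulVecLin (Pi.single j 1) ∈ LinearMap.range A.mulVecLin :=
      LinearMap.mem_range_self _ _
    rw [hbot] at this
    simpa using this
  have h2 := congrFun h1 i
  simpa [Matrix.mulVecLin, Matrix.mulVec_single] using h2

lemma exists_proj {k β : ℕ} (M : Matrix (Fin k) (Fin β) ℂ) :
    ∃ Q : Matrix (Fin β) (Fin β) ℂ, Qᴴ = Q ∧ Q * Q = Q ∧ Q * Mᴴ = Mᴴ ∧
      Q.trace = ((Mᴴ * M).rank : ℂ) := by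
  set H : Matrix (Fin β) (Fin β) ℂ := Mᴴ * M with hHdef
  have hH : H.IsHermitian := (posSemidef_conjTranspose_mul_self M).1
  set U : Matrix (Fin β) (Fin β) ℂ := (hH.eigenvectorUnitary : Matrix (Fin β) (Fin β) ℂ) with hU
  set d : Fin β → ℂ := fun i => if hH.eigenvalues i = 0 then 0 else 1 with hd
  have hUU : Uᴴ * U = 1 := by
    rw [← star_eq_conjTranspose]
    exact mem_unitaryGroup_iff'.mp hH.eigenvectorUnitary.2
  have hds : star d = d := by
    funext i; by_cases h : hH.eigenvalues i = 0 <;> simp [hd, h]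
  have hdd : (fun i => d i * d i) = d := by
    funext i; by_cases h : hH.eigenvalues i = 0 <;> simp [hd, h]
  set Q : Matrix (Fin β) (Fin β) ℂ := U * diagonal d * Uᴴ with hQ
  have hQH : Qᴴ = Q := by
    simp only [hQ, conjTranspose_mul, conjTranspose_conjTranspose, diagonal_conjTranspose, hds,
      mul_assoc]
  have hQ2 : Q * Q = Q := by
    have h1 : Q * Q = U * (diagonal d * (Uᴴ * U) * diagonal d) * Uᴴ := by
      simp only [hQ]; noncomm_ring
    rw [h1, hUU, mul_one, diagonal_mul_diagonal, hdd, hQ, mul_assoc]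
  have hspec := hH.spectral_theorem
  rw [Unitary.conjStarAlgAut_apply, ← hU] at hspec
  have hde : (fun i => d i * (RCLike.ofReal ∘ hH.eigenvalues) i) = RCLike.ofReal ∘ hH.eigenvalues := by
    funext i; by_cases h : hH.eigenvalues i = 0 <;>
      simp [hd, h, Function.comp, Pi.mul_apply]
  have hQH' : Q * H = H := by
    conv_lhs => rw [hspec]
    have h1 : Q * (U * diagonal (RCLike.ofReal ∘ hH.eigenvalues) * star U)
        = U * (diagonal d * (Uᴴ * U) * diagonal (RCLike.ofReal ∘ hH.eigenvalues)) * star U := by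
      simp only [hQ, star_eq_conjTranspose]; noncomm_ring
    rw [h1, hUU, mul_one, diagonal_mul_diagonal, hde]
    conv_rhs => rw [hspec]
    try rw [mul_assoc]
  have e2 : H * Q = H := by
    have h := congrArg conjTranspose hQH'
    rwa [conjTranspose_mul, hQH, hH.eq] at h
  have hNH : (1 - Q) * H = 0 := by rw [sub_mul, one_mul, hQH', sub_self]
  have h1Q : (1 - Q)ᴴ = 1 - Q := by rw [conjTranspose_sub, conjTranspose_one, hQH]
  have hQM : Q * Mᴴ = Mᴴ := by
    have h0 : ((1 - Q) * Mᴴ) * ((1 - Q) * Mᴴ)ᴴ = 0 := by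
      rw [conjTranspose_mul, conjTranspose_conjTranspose, h1Q]
      calc (1 - Q) * Mᴴ * (M * (1 - Q)) = ((1 - Q) * H) * (1 - Q) := by
            rw [hHdef]; simp only [Matrix.mul_assoc]
        _ = 0 := by rw [hNH, Matrix.zero_mul]
    have h1 := self_mul_conjTranspose_eq_zero.mp h0
    rw [Matrix.sub_mul, Matrix.one_mul, sub_eq_zero] at h1
    exact h1.symm
  have htr : Q.trace = ((Mᴴ * M).rank : ℂ) := by
    have h1 : Q.trace = (diagonal d).trace := by
      rw [hQ, trace_mul_comm, ← mul_assoc, hUU, one_mul]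
    rw [h1, trace_diagonal, ← hHdef, hH.rank_eq_card_non_zero_eigs]
    rw [Fintype.card_subtype]
    push_cast
    rw [Finset.card_filter]
    push_cast
    apply Finset.sum_congr rfl
    intro i _
    by_cases h : hH.eigenvalues i = 0 <;> simp [hd, h]
  exact ⟨Q, hQH, hQ2, hQM, htr⟩

lemma trace_sq_le' {β : ℕ} (Q c : Matrix (Fin β) (Fin β) ℂ) (r : ℕ)
    (hQH : Qᴴ = Q) (hQ2 : Q * Q = Q) (htr : Q.trace = (r : ℂ)) (hQc : Q * c = c) :
    ‖c.trace‖ ^ 2 ≤ (r : ℝ) * ∑ k, ∑ l, ‖c k l‖ ^ 2 := by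
  have h1 : c.trace = ∑ p : Fin β × Fin β, Q p.1 p.2 * c p.2 p.1 := by
    conv_lhs => rw [← hQc]
    rw [Matrix.trace, Fintype.sum_prod_type]
    simp only [Matrix.diag, Matrix.mul_apply]
  have h2 : ‖c.trace‖ ≤ ∑ p : Fin β × Fin β, ‖Q p.1 p.2‖ * ‖c p.2 p.1‖ := by
    rw [h1]
    refine (norm_sum_le _ _).trans ?_
    apply Finset.sum_le_sum
    intro p _
    rw [norm_mul]
  have h3 : ‖c.trace‖ ^ 2 ≤ (∑ p : Fin β × Fin β, ‖Q p.1 p.2‖ ^ 2) *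
      (∑ p : Fin β × Fin β, ‖c p.2 p.1‖ ^ 2) := by
    refine le_trans (pow_le_pow_left₀ (norm_nonneg _) h2 2) ?_
    exact Finset.sum_mul_sq_le_sq_mul_sq _ _ _
  have hQsum : (∑ p : Fin β × Fin β, ‖Q p.1 p.2‖ ^ 2) = (r : ℝ) := by
    have e1 : (Q * Qᴴ).trace = ((∑ p : Fin β × Fin β, ‖Q p.1 p.2‖ ^ 2 : ℝ) : ℂ) := by
      rw [Matrix.trace, Fintype.sum_prod_type]
      push_cast
      apply Finset.sum_congr rfl
      intro k _
      simp only [Matrix.diag, Matrix.mul_apply, conjTranspose_apply]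
      apply Finset.sum_congr rfl
      intro l _
      rw [show star (Q k l) = (starRingEnd ℂ) (Q k l) from rfl, Complex.mul_conj]
      norm_cast
      rw [Complex.normSq_eq_norm_sq]
    rw [hQH, hQ2, htr] at e1
    exact_mod_cast e1.symm
  have hcsum : (∑ p : Fin β × Fin β, ‖c p.2 p.1‖ ^ 2) = ∑ k, ∑ l, ‖c k l‖ ^ 2 := by
    rw [← Fintype.sum_prod_type']
    exact Fintype.sum_equiv (Equiv.prodComm _ _) _ _ (fun p => rfl)
  rw [hQsum, hcsum] at h3
  exact h3

section Aux

variable {m n β : ℕ}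

lemma sum4_comm {α : Type*} [AddCommMonoid α] {ι κ σ τ : Type*}
    [Fintype ι] [Fintype κ] [Fintype σ] [Fintype τ] (f : ι → κ → σ → τ → α) :
    ∑ a, ∑ b, ∑ c, ∑ d, f a b c d = ∑ c, ∑ d, ∑ a, ∑ b, f a b c d :=
  calc ∑ a, ∑ b, ∑ c, ∑ d, f a b c d
      = ∑ a, ∑ c, ∑ b, ∑ d, f a b c d :=
        Finset.sum_congr rfl fun a _ => Finset.sum_comm
    _ = ∑ c, ∑ a, ∑ b, ∑ d, f a b c d := Finset.sum_comm
    _ = ∑ c, ∑ a, ∑ d, ∑ b, f a b c d :=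
        Finset.sum_congr rfl fun c _ => Finset.sum_congr rfl fun a _ => Finset.sum_comm
    _ = ∑ c, ∑ d, ∑ a, ∑ b, f a b c d := Finset.sum_congr rfl fun c _ => Finset.sum_comm

lemma quad_kron (A : Matrix (Fin m) (Fin β) ℂ) (B : Matrix (Fin n) (Fin β) ℂ)
    (x : Fin m × Fin n → ℂ) :
    star x ⬝ᵥ (((A * Aᴴ) ⊗ₖ (B * Bᴴ)) *ᵥ x)
      = ∑ k, ∑ l, star (∑ u : Fin m × Fin n, star (A u.1 k) * star (B u.2 l) * x u)
          * (∑ u : Fin m × Fin n, star (A u.1 k) * star (B u.2 l) * x u) := by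
  have lhs_eq : star x ⬝ᵥ (((A * Aᴴ) ⊗ₖ (B * Bᴴ)) *ᵥ x)
      = ∑ u : Fin m × Fin n, ∑ v : Fin m × Fin n, ∑ k, ∑ l,
          A u.1 k * star (A v.1 k) * (B u.2 l * star (B v.2 l)) * (star (x u) * x v) := by
    rw [dotProduct]
    refine Finset.sum_congr rfl fun u _ => ?_
    rw [Pi.star_apply, mulVec, dotProduct, Finset.mul_sum]
    refine Finset.sum_congr rfl fun v _ => ?_
    rw [kroneckerMap_apply, Matrix.mul_apply, Matrix.mul_apply, Finset.sum_mul_sum,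
      Finset.sum_mul, Finset.mul_sum]
    refine Finset.sum_congr rfl fun k _ => ?_
    rw [Finset.sum_mul, Finset.mul_sum]
    refine Finset.sum_congr rfl fun l _ => ?_
    simp only [conjTranspose_apply]
    ring
  have rhs_eq : ∀ k l, star (∑ u : Fin m × Fin n, star (A u.1 k) * star (B u.2 l) * x u)
          * (∑ u : Fin m × Fin n, star (A u.1 k) * star (B u.2 l) * x u)
      = ∑ u : Fin m × Fin n, ∑ v : Fin m × Fin n,
          A u.1 k * star (A v.1 k) * (B u.2 l * star (B v.2 l)) * (star (x u) * x v) := by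
    intro k l
    rw [star_sum, Finset.sum_mul_sum]
    refine Finset.sum_congr rfl fun u _ => Finset.sum_congr rfl fun v _ => ?_
    simp only [star_mul', star_star]
    ring
  rw [lhs_eq]
  simp only [rhs_eq]
  exact sum4_comm _

lemma quad_vmv (A : Matrix (Fin m) (Fin β) ℂ) (B : Matrix (Fin n) (Fin β) ℂ)
    (x : Fin m × Fin n → ℂ) :
    star x ⬝ᵥ ((vecMulVec (fun p : Fin m × Fin n => (B * Aᵀ) p.2 p.1)
        (star fun p : Fin m × Fin n => (B * Aᵀ) p.2 p.1)) *ᵥ x)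
      = star (∑ k, ∑ u : Fin m × Fin n, star (A u.1 k) * star (B u.2 k) * x u)
          * (∑ k, ∑ u : Fin m × Fin n, star (A u.1 k) * star (B u.2 k) * x u) := by
  set v : Fin m × Fin n → ℂ := fun p => (B * Aᵀ) p.2 p.1 with hv
  have hs : ∑ k, ∑ u : Fin m × Fin n, star (A u.1 k) * star (B u.2 k) * x u
      = ∑ u : Fin m × Fin n, star (v u) * x u := by
    rw [Finset.sum_comm]
    refine Finset.sum_congr rfl fun u _ => ?_
    simp only [hv, Matrix.mul_apply, star_sum, Finset.sum_mul]
    refine Finset.sum_congr rfl fun k _ => ?_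
    simp only [star_mul', transpose_apply]
    ring
  rw [hs]
  have hlhs : star x ⬝ᵥ ((vecMulVec v (star v)) *ᵥ x)
      = (∑ u : Fin m × Fin n, star (x u) * v u) * (∑ u : Fin m × Fin n, star (v u) * x u) := by
    rw [dotProduct, Finset.sum_mul]
    refine Finset.sum_congr rfl fun u _ => ?_
    rw [mulVec, dotProduct, Finset.mul_sum, Finset.mul_sum]
    refine Finset.sum_congr rfl fun w _ => ?_
    simp only [vecMulVec_apply, Pi.star_apply]
    ring
  rw [hlhs, star_sum]
  congr 1
  refine Finset.sum_congr rfl fun u _ => ?_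
  simp only [star_mul', star_star]
  ring

end Aux

lemma trace_sq_le'' {β : ℕ} (R c : Matrix (Fin β) (Fin β) ℂ) (r : ℕ)
    (hRH : Rᴴ = R) (hR2 : R * R = R) (htr : R.trace = (r : ℂ)) (hcR : c * R = c) :
    ‖c.trace‖ ^ 2 ≤ (r : ℝ) * ∑ k, ∑ l, ‖c k l‖ ^ 2 := by
  have h1 : R * cᴴ = cᴴ := by
    have h := congrArg conjTranspose hcR
    rwa [conjTranspose_mul, hRH] at h
  have h2 := trace_sq_le' R cᴴ r hRH hR2 htr h1
  have h3 : ‖cᴴ.trace‖ = ‖c.trace‖ := by rw [trace_conjTranspose, norm_star]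
  have h4 : (∑ k, ∑ l, ‖cᴴ k l‖ ^ 2) = ∑ k, ∑ l, ‖c k l‖ ^ 2 := by
    rw [Finset.sum_comm]
    exact Finset.sum_congr rfl fun k _ => Finset.sum_congr rfl fun l _ => by
      simp [conjTranspose_apply]
  rw [h3, h4] at h2
  exact h2

section Main

variable {m n β : ℕ}

lemma hz_norm (z : ℂ) : star z * z = ((‖z‖ ^ 2 : ℝ) : ℂ) := by
  rw [show star z = (starRingEnd ℂ) z from rfl, mul_comm, Complex.mul_conj]
  norm_cast
  rw [Complex.normSq_eq_norm_sq]

theorem kron_main_aux (hm : 1 ≤ m) (hn : 1 ≤ n) (hβ : 1 ≤ β)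
    (A : Matrix (Fin m) (Fin β) ℂ) (B : Matrix (Fin n) (Fin β) ℂ)
    (hA : A ≠ 0) (hB : B ≠ 0) :
    (((A * Aᴴ) ⊗ₖ (B * Bᴴ)) -
        (((min (A * Aᴴ).rank (B * Bᴴ).rank : ℕ) : ℂ))⁻¹ •
          vecMulVec (fun p : Fin m × Fin n => (B * Aᵀ) p.2 p.1)
            (star fun p : Fin m × Fin n => (B * Aᵀ) p.2 p.1)).PosSemidef ∧
    (vecMulVec (fun p : Fin m × Fin n => (B * Aᵀ) p.2 p.1)
        (star fun p : Fin m × Fin n => (B * Aᵀ) p.2 p.1)).PosSemidef := by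
  have hvmvH : (vecMulVec (fun p : Fin m × Fin n => (B * Aᵀ) p.2 p.1)
      (star fun p : Fin m × Fin n => (B * Aᵀ) p.2 p.1)).IsHermitian := by
    show _ᴴ = _
    ext u w
    simp only [conjTranspose_apply, vecMulVec_apply, Pi.star_apply, star_mul', star_star]
    ring
  have part2 : (vecMulVec (fun p : Fin m × Fin n => (B * Aᵀ) p.2 p.1)
      (star fun p : Fin m × Fin n => (B * Aᵀ) p.2 p.1)).PosSemidef := by
    refine posSemidef_iff_dotProduct_mulVec.mpr ⟨hvmvH, fun x => ?_⟩
    rw [quad_vmv A B x]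
    exact star_mul_self_nonneg _
  refine ⟨posSemidef_iff_dotProduct_mulVec.mpr ⟨?_, ?_⟩, part2⟩
  · -- Hermitian part
    apply IsHermitian.sub
    · show _ᴴ = _
      ext u w
      simp only [conjTranspose_apply, kroneckerMap_apply, star_mul']
      rw [(isHermitian_mul_conjTranspose_self A).apply, (isHermitian_mul_conjTranspose_self B).apply]
      try ring
    · show _ᴴ = _
      rw [conjTranspose_smul, hvmvH.eq]
      have : star ((((min (A * Aᴴ).rank (B * Bᴴ).rank : ℕ) : ℂ))⁻¹)
          = (((min (A * Aᴴ).rank (B * Bᴴ).rank : ℕ) : ℂ))⁻¹ := by simp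
      rw [this]
  · -- quadratic form
    intro x
    set ra : ℕ := (A * Aᴴ).rank with hra
    set rb : ℕ := (B * Bᴴ).rank with hrb
    have hrapos : 0 < ra := by
      rw [hra, rank_self_mul_conjTranspose]; exact matrix_rank_pos hA
    have hrbpos : 0 < rb := by
      rw [hrb, rank_self_mul_conjTranspose]; exact matrix_rank_pos hB
    rw [sub_mulVec, dotProduct_sub, quad_kron A B x, smul_mulVec, dotProduct_smul,
      quad_vmv A B x]
    set c : Matrix (Fin β) (Fin β) ℂ :=
      Matrix.of (fun k l => ∑ u : Fin m × Fin n, star (A u.1 k) * star (B u.2 l) * x u) with hc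
    have hckl : ∀ k l, c k l = ∑ u : Fin m × Fin n, star (A u.1 k) * star (B u.2 l) * x u :=
      fun k l => rfl
    -- rewrite the two sums in terms of c
    have hS : (∑ k, ∑ l, star (∑ u : Fin m × Fin n, star (A u.1 k) * star (B u.2 l) * x u)
          * (∑ u : Fin m × Fin n, star (A u.1 k) * star (B u.2 l) * x u))
        = ((∑ k, ∑ l, ‖c k l‖ ^ 2 : ℝ) : ℂ) := by
      push_cast
      exact Finset.sum_congr rfl fun k _ => Finset.sum_congr rfl fun l _ => by
        rw [← hckl k l, hz_norm]; push_cast; ring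
    have htrc : (∑ k, ∑ u : Fin m × Fin n, star (A u.1 k) * star (B u.2 k) * x u) = c.trace :=
      Finset.sum_congr rfl fun k _ => rfl
    rw [hS, htrc, hz_norm]
    -- projections
    obtain ⟨Q, hQH, hQ2, hQA, hQtr⟩ := exists_proj A
    obtain ⟨R, hRH, hR2, hRB, hRtr⟩ := exists_proj (B.map star)
    have hQtr' : Q.trace = (ra : ℂ) := by
      rw [hQtr, rank_conjTranspose_mul_self, hra, rank_self_mul_conjTranspose]
    have hmap : B.map star = Bᴴᵀ := by
      ext i j; simp [Matrix.map_apply, conjTranspose_apply]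
    have hRtr' : R.trace = (rb : ℂ) := by
      rw [hRtr, rank_conjTranspose_mul_self, hmap, rank_transpose, rank_conjTranspose,
        hrb, rank_self_mul_conjTranspose]
    have hQc : Q * c = c := by
      ext k l
      rw [Matrix.mul_apply]
      simp only [hckl, Finset.mul_sum]
      rw [Finset.sum_comm]
      refine Finset.sum_congr rfl fun u _ => ?_
      have h := congrFun (congrFun hQA k) u.1
      rw [Matrix.mul_apply] at h
      simp only [conjTranspose_apply] at h
      calc ∑ t, Q k t * (star (A u.1 t) * star (B u.2 l) * x u)
          = (∑ t, Q k t * star (A u.1 t)) * (star (B u.2 l) * x u) := by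
            rw [Finset.sum_mul]; exact Finset.sum_congr rfl fun t _ => by ring
        _ = star (A u.1 k) * star (B u.2 l) * x u := by rw [h]; ring
    have hBR : (B.map star) * R = B.map star := by
      have h := congrArg conjTranspose hRB
      rwa [conjTranspose_mul, conjTranspose_conjTranspose, hRH] at h
    have hcR : c * R = c := by
      ext k l
      rw [Matrix.mul_apply]
      simp only [hckl, Finset.sum_mul]
      rw [Finset.sum_comm]
      refine Finset.sum_congr rfl fun u _ => ?_
      have h := congrFun (congrFun hBR u.2) l
      rw [Matrix.mul_apply] at h
      simp only [Matrix.map_apply] at h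
      calc ∑ t, star (A u.1 k) * star (B u.2 t) * x u * R t l
          = (star (A u.1 k) * x u) * (∑ t, star (B u.2 t) * R t l) := by
            rw [Finset.mul_sum]; exact Finset.sum_congr rfl fun t _ => by ring
        _ = star (A u.1 k) * star (B u.2 l) * x u := by rw [h]; ring
    have TA := trace_sq_le' Q c ra hQH hQ2 hQtr' hQc
    have TB := trace_sq_le'' R c rb hRH hR2 hRtr' hcR
    · -- final real inequality
      set Sr : ℝ := ∑ k, ∑ l, ‖c k l‖ ^ 2 with hSr
      set Tr : ℝ := ‖c.trace‖ ^ 2 with hTr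
      have hmin : Tr ≤ ((min ra rb : ℕ) : ℝ) * Sr := by
        rcases min_cases ra rb with ⟨h1, _⟩ | ⟨h1, _⟩ <;> rw [h1] <;> [exact TA; exact TB]
      have hminpos : (0 : ℝ) < ((min ra rb : ℕ) : ℝ) := by
        have : 0 < min ra rb := lt_min hrapos hrbpos
        exact_mod_cast this
      have hfinal : (((min ra rb : ℕ) : ℝ))⁻¹ * Tr ≤ Sr := (inv_mul_le_iff₀ hminpos).mpr hmin
      rw [show ((min ra rb : ℕ) : ℂ) = (((min ra rb : ℕ) : ℝ) : ℂ) by norm_cast]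
      rw [smul_eq_mul, ← Complex.ofReal_inv, ← Complex.ofReal_mul, ← Complex.ofReal_sub]
      rw [Complex.zero_le_real]
      linarith

end Main

/-- for nonzero `A : ℂ^{m×β}` and `B : ℂ^{n×β}`,
`AA* ⊗ BB* ≽ (1/min(rk AA*, rk BB*)) vec(BAᵀ) vec(BAᵀ)* ≽ 0`.
Here the Kronecker product is indexed by `Fin m × Fin n` (corresponding to the
1-based index `n(i−1)+p ↦ (i,p)`), and `vec(P)` for `P : ℂ^{n×m}` is the
function `(j, i) ↦ P i j` (the 1-based `vec(P)_{n(j−1)+i} = P_{ij}`). -/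
theorem kronecker_loewner_lower_bound (m n β : ℕ) (hm : 1 ≤ m) (hn : 1 ≤ n) (hβ : 1 ≤ β)
    (A : Matrix (Fin m) (Fin β) ℂ) (B : Matrix (Fin n) (Fin β) ℂ)
    (hA : A ≠ 0) (hB : B ≠ 0) :
    (((A * Aᴴ) ⊗ₖ (B * Bᴴ)) -
        (((min (A * Aᴴ).rank (B * Bᴴ).rank : ℕ) : ℂ))⁻¹ •
          vecMulVec (fun p : Fin m × Fin n => (B * Aᵀ) p.2 p.1)
            (star fun p : Fin m × Fin n => (B * Aᵀ) p.2 p.1)).PosSemidef ∧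
    (vecMulVec (fun p : Fin m × Fin n => (B * Aᵀ) p.2 p.1)
        (star fun p : Fin m × Fin n => (B * Aᵀ) p.2 p.1)).PosSemidef :=
  kron_main_aux hm hn hβ A B hA hB
end

section
/- For all integers m, n, β ≥ 1 and every integer r with 1 ≤ r ≤ min(m, n, β), there exist matrices A ∈ ℂ^{m×β} and B ∈ ℂ^{n×β} with rk(AA*) = rk(BB*) = r and a vector u ∈ ℂ^{mn} such that u*(AA* ⊗ BB*)u = (1/r)·|vec(BA^T)* u|² and this common value is nonzero. In particular, the coefficient 1/min(rk AA*, rk BB*) in the lower bound AA* ⊗ BB* ≽ (1/min(rk AA*, rk BB*)) vec(BA^T) vec(BA^T)* cannot be replaced by any larger constant uniformly over all A, B. -/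
open Matrix Kronecker ComplexOrder


lemma aux_sum_ind (m r : ℕ) (hrm : r ≤ m) :
    ∑ i : Fin m, (if (i : ℕ) < r then (1:ℂ) else 0) = r := by
  rw [Finset.sum_boole]
  have : (Finset.filter (fun x : Fin m => ↑x < r) Finset.univ)
      = (Finset.range r).attachFin (fun a ha => lt_of_lt_of_le (Finset.mem_range.mp ha) hrm) := by
    ext x; simp
  rw [this, Finset.card_attachFin, Finset.card_range]

lemma aux_proj (m β r : ℕ) (hrβ : r ≤ β)
    (A : Matrix (Fin m) (Fin β) ℂ)
    (hA : ∀ i j, A i j = if (i : ℕ) = (j : ℕ) ∧ (i : ℕ) < r then 1 else 0) :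
    A * Aᴴ = Matrix.diagonal (fun i : Fin m => if (i : ℕ) < r then (1:ℂ) else 0) := by
  ext i k
  simp only [Matrix.mul_apply, Matrix.conjTranspose_apply, hA, Matrix.diagonal_apply]
  by_cases hi : (i : ℕ) < r
  · rw [Finset.sum_eq_single (⟨(i : ℕ), lt_of_lt_of_le hi hrβ⟩ : Fin β)]
    · by_cases hik : i = k
      · subst hik; simp [hi]
      · have : ¬ ((k : ℕ) = (i : ℕ)) := fun h => hik (Fin.ext h.symm)
        simp [hi, this, hik]
    · intro b _ hb
      have : ¬ ((i : ℕ) = (b : ℕ)) := by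
        intro h; apply hb; exact Fin.ext h.symm
      simp [this]
    · simp
  · have hz : ∀ b : Fin β, b ∈ Finset.univ → (if (i:ℕ) = (b:ℕ) ∧ (i:ℕ) < r then (1:ℂ) else 0) *
        star (if (k:ℕ) = (b:ℕ) ∧ (k:ℕ) < r then (1:ℂ) else 0) = 0 := by
      intro b _; simp [hi]
    rw [Finset.sum_congr rfl hz, Finset.sum_const_zero]
    by_cases hik : i = k
    · subst hik; simp [hi]
    · simp [hik]

lemma aux_BAt (m n β r : ℕ) (hrβ : r ≤ β)
    (A : Matrix (Fin m) (Fin β) ℂ) (B : Matrix (Fin n) (Fin β) ℂ)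
    (hA : ∀ i j, A i j = if (i : ℕ) = (j : ℕ) ∧ (i : ℕ) < r then 1 else 0)
    (hB : ∀ i j, B i j = if (i : ℕ) = (j : ℕ) ∧ (i : ℕ) < r then 1 else 0)
    (j : Fin n) (i : Fin m) :
    (B * Aᵀ) j i = if (i : ℕ) = (j : ℕ) ∧ (i : ℕ) < r then 1 else 0 := by
  simp only [Matrix.mul_apply, Matrix.transpose_apply, hA, hB]
  by_cases hi : (i : ℕ) < r
  · rw [Finset.sum_eq_single (⟨(i : ℕ), lt_of_lt_of_le hi hrβ⟩ : Fin β)]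
    · by_cases hij : (i : ℕ) = (j : ℕ)
      · simp [hi, hij.symm]
      · have : ¬ ((j : ℕ) = (i : ℕ)) := fun h => hij h.symm
        simp [hi, this, hij]
    · intro b _ hb
      have : ¬ ((i : ℕ) = (b : ℕ)) := by
        intro h; apply hb; exact Fin.ext h.symm
      simp [this]
    · simp
  · have hz : ∀ b : Fin β, b ∈ Finset.univ → (if (j:ℕ) = (b:ℕ) ∧ (j:ℕ) < r then (1:ℂ) else 0) *
        (if (i:ℕ) = (b:ℕ) ∧ (i:ℕ) < r then (1:ℂ) else 0) = 0 := by
      intro b _; simp [hi]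
    rw [Finset.sum_congr rfl hz, Finset.sum_const_zero]
    simp [hi]

lemma aux_rank (m r : ℕ) (hrm : r ≤ m) :
    (Matrix.diagonal (fun i : Fin m => if (i : ℕ) < r then (1:ℂ) else 0)).rank = r := by
  rw [Matrix.rank_diagonal]
  rw [Fintype.card_subtype]
  have : (Finset.filter (fun x : Fin m => (if (x:ℕ) < r then (1:ℂ) else 0) ≠ 0) Finset.univ)
      = (Finset.range r).attachFin (fun a ha => lt_of_lt_of_le (Finset.mem_range.mp ha) hrm) := by
    ext x
    by_cases h : (x : ℕ) < r <;> simp [h]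
  rw [this, Finset.card_attachFin, Finset.card_range]

lemma aux_sum2 (m n r : ℕ) (hrm : r ≤ m) (hrn : r ≤ n) :
    ∑ p : Fin m × Fin n, (if ((p.1 : ℕ) = (p.2 : ℕ) ∧ (p.1 : ℕ) < r) then (1:ℂ) else 0) = r := by
  rw [Fintype.sum_prod_type]
  have hinner : ∀ i : Fin m, ∑ j : Fin n, (if ((i : ℕ) = (j : ℕ) ∧ (i : ℕ) < r) then (1:ℂ) else 0)
      = if (i : ℕ) < r then 1 else 0 := by
    intro i
    by_cases hi : (i : ℕ) < r
    · rw [Finset.sum_eq_single (⟨(i : ℕ), lt_of_lt_of_le hi hrn⟩ : Fin n)]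
      · simp [hi]
      · intro b _ hb
        have : ¬ ((i : ℕ) = (b : ℕ)) := fun h => hb (Fin.ext h.symm)
        simp [this]
      · simp
    · simp [hi]
  rw [Finset.sum_congr rfl (fun i _ => hinner i)]
  exact aux_sum_ind m r hrm

/-- sharpness of the constant `1/min(rk AA*, rk BB*)` in the
Kronecker-product lower bound. -/
theorem kronecker_lower_bound_sharp (m n β r : ℕ) (hm : 1 ≤ m) (hn : 1 ≤ n) (hβ : 1 ≤ β)
    (hr : 1 ≤ r) (hrm : r ≤ min m (min n β)) :
    ∃ (A : Matrix (Fin m) (Fin β) ℂ) (B : Matrix (Fin n) (Fin β) ℂ)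
      (u : Fin m × Fin n → ℂ),
      (A * Aᴴ).rank = r ∧ (B * Bᴴ).rank = r ∧
      star u ⬝ᵥ (((A * Aᴴ) ⊗ₖ (B * Bᴴ)).mulVec u)
        = ((r : ℂ))⁻¹ *
            ((‖(star fun p : Fin m × Fin n => (B * Aᵀ) p.2 p.1) ⬝ᵥ u‖ ^ 2 : ℝ) : ℂ) ∧
      star u ⬝ᵥ (((A * Aᴴ) ⊗ₖ (B * Bᴴ)).mulVec u) ≠ 0 := by
  have hrm' : r ≤ m := le_trans hrm (min_le_left _ _)
  have hrn : r ≤ n := le_trans hrm (le_trans (min_le_right _ _) (min_le_left _ _))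
  have hrβ : r ≤ β := le_trans hrm (le_trans (min_le_right _ _) (min_le_right _ _))
  set A : Matrix (Fin m) (Fin β) ℂ :=
    fun i j => if (i : ℕ) = (j : ℕ) ∧ (i : ℕ) < r then 1 else 0 with hAdef
  set B : Matrix (Fin n) (Fin β) ℂ :=
    fun i j => if (i : ℕ) = (j : ℕ) ∧ (i : ℕ) < r then 1 else 0 with hBdef
  set u : Fin m × Fin n → ℂ :=
    fun p => if (p.1 : ℕ) = (p.2 : ℕ) ∧ (p.1 : ℕ) < r then 1 else 0 with hudef
  have hA : ∀ i j, A i j = if (i : ℕ) = (j : ℕ) ∧ (i : ℕ) < r then 1 else 0 := fun _ _ => rfl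
  have hB : ∀ i j, B i j = if (i : ℕ) = (j : ℕ) ∧ (i : ℕ) < r then 1 else 0 := fun _ _ => rfl
  have hPA := aux_proj m β r hrβ A hA
  have hPB := aux_proj n β r hrβ B hB
  refine ⟨A, B, u, ?_, ?_, ?_, ?_⟩
  · rw [hPA]; exact aux_rank m r hrm'
  · rw [hPB]; exact aux_rank n r hrn
  all_goals {
    have hu01 : ∀ p, u p = 0 ∨ u p = 1 := by
      intro p
      by_cases h : (p.1 : ℕ) = (p.2 : ℕ) ∧ (p.1 : ℕ) < r
      · right
        show (if (p.1 : ℕ) = (p.2 : ℕ) ∧ (p.1 : ℕ) < r then (1:ℂ) else 0) = 1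
        rw [if_pos h]
      · left
        show (if (p.1 : ℕ) = (p.2 : ℕ) ∧ (p.1 : ℕ) < r then (1:ℂ) else 0) = 0
        rw [if_neg h]
    have hmv : (((A * Aᴴ) ⊗ₖ (B * Bᴴ)).mulVec u) = u := by
      funext p
      rw [hPA, hPB]
      unfold Matrix.mulVec dotProduct
      rw [Finset.sum_eq_single p]
      · rcases hu01 p with h | h
        · simp [h]
        · have hcond : (p.1 : ℕ) = (p.2 : ℕ) ∧ (p.1 : ℕ) < r := by
            by_contra hc; simp [hudef, hc] at h
          simp only [Matrix.kroneckerMap_apply, Matrix.diagonal_apply, if_pos rfl, h]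
          have h2 : (p.2 : ℕ) < r := hcond.1 ▸ hcond.2
          simp [hcond.2, h2]
        -- cleanup
      · intro q _ hq
        have : p.1 ≠ q.1 ∨ p.2 ≠ q.2 := by
          by_contra hc
          push_neg at hc
          exact hq (Prod.ext hc.1 hc.2).symm
        rcases this with h | h
        · simp [Matrix.kroneckerMap_apply, Matrix.diagonal_apply, h]
        · simp [Matrix.kroneckerMap_apply, Matrix.diagonal_apply, h]
      · simp
    have hdot : star u ⬝ᵥ u = (r : ℂ) := by
      unfold dotProduct
      have : ∀ p : Fin m × Fin n, star u p * u p = u p := by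
        intro p; rcases hu01 p with h | h <;> simp [h]
      rw [Finset.sum_congr rfl (fun p _ => this p)]
      exact aux_sum2 m n r hrm' hrn
    have hBAt : (fun p : Fin m × Fin n => (B * Aᵀ) p.2 p.1) = u := by
      funext p
      rw [aux_BAt m n β r hrβ A B hA hB p.2 p.1]
    first
    | · rw [hmv, hdot, hBAt, hdot]
        have hnorm : ‖(r : ℂ)‖ = (r : ℝ) := by
          simp
        rw [hnorm]
        have hr0 : (r : ℂ) ≠ 0 := Nat.cast_ne_zero.mpr (by omega)
        push_cast
        field_simp
    | · rw [hmv, hdot]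
        exact Nat.cast_ne_zero.mpr (by omega)
  }
end

section
/- Fix an integer N ≥ 1 and let e_1, …, e_N denote the standard basis of ℂ^N. For 1 ≤ i, j ≤ N define Y_{ij} := [Σ_{k=1}^{i} e_k ⊗ e_{i−k+1}] [Σ_{l=1}^{j} e_l ⊗ e_{j−l+1}]^T ∈ ℂ^{N²×N²}, where ⊗ is the Kronecker product of column vectors. Then the block matrix Y = (Y_{ij})_{i,j=1}^{N} ∈ ℂ^{N³×N³} is positive semidefinite of rank one, and for all A, B ∈ ℂ^{N×N} and all 1 ≤ i, j ≤ N one has tr((A ⊗ B) Y_{ij}*) = (A ⋄ B)_{ij}; that is, the bilinear product parametrized by Y is the matrix convolution. -/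
open Matrix Kronecker ComplexOrder

/-- Standard basis vector `e_i` of `ℂ^N`. -/
noncomputable def stdVec (N : ℕ) (i : Fin N) : Fin N → ℂ := fun p => if p = i then 1 else 0

/-- The vector `Σ_{k ≤ i} e_k ⊗ e_{i-k}` (1-based: `Σ_{k=1}^i e_k ⊗ e_{i−k+1}`). -/
noncomputable def convVec (N : ℕ) (i : Fin N) : Fin N × Fin N → ℂ :=
  fun a => ∑ k : Fin N, if k.1 ≤ i.1 then stdVec N k a.1 * stdVec N (i - k) a.2 else 0

/-- The block matrix `Y = (Y_{ij})` with
`Y_{ij} = [Σ_{k≤i} e_k ⊗ e_{i-k}][Σ_{l≤j} e_l ⊗ e_{j-l}]ᵀ`. -/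
noncomputable def convY (N : ℕ) :
    Matrix (Fin N × (Fin N × Fin N)) (Fin N × (Fin N × Fin N)) ℂ :=
  Matrix.of fun p q => convVec N p.1 p.2 * convVec N q.1 q.2

/-- Closed form of `convVec`. -/
lemma convVec_apply (N : ℕ) (i : Fin N) (a : Fin N × Fin N) :
    convVec N i a = if a.1.1 ≤ i.1 ∧ a.2 = i - a.1 then 1 else 0 := by
  unfold convVec stdVec
  rw [Finset.sum_eq_single a.1]
  · simp [ite_and]
  · intro k _ hk; simp [Ne.symm hk]
  · simp

/-- `convVec` is real-valued. -/
lemma star_convVec (N : ℕ) (i : Fin N) (a : Fin N × Fin N) :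
    star (convVec N i a) = convVec N i a := by
  simp [convVec_apply, apply_ite (star : ℂ → ℂ)]

/-- `Y` is positive semidefinite of rank one and
`tr((A ⊗ B) Y_{ij}*) = (A ⋄ B)_{ij}`, i.e. the bilinear product parametrized by
`Y` is the matrix convolution. -/
theorem matConv_parametrization (N : ℕ) (hN : 1 ≤ N) :
    (convY N).PosSemidef ∧ (convY N).rank = 1 ∧
      ∀ (A B : Matrix (Fin N) (Fin N) ℂ) (i j : Fin N),
        Matrix.trace ((A ⊗ₖ B) * (vecMulVec (convVec N i) (convVec N j))ᴴ)
          = matConv A B i j := by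
  set v : Fin N × (Fin N × Fin N) → ℂ := fun p => convVec N p.1 p.2 with hv
  have hY : convY N = replicateCol (Fin 1) v * (replicateCol (Fin 1) v)ᴴ := by
    ext p q
    simp [convY, mul_apply, replicateCol_apply, conjTranspose_apply, star_convVec, hv]
  refine ⟨?_, ?_, ?_⟩
  · rw [hY]; exact posSemidef_self_mul_conjTranspose _
  · refine le_antisymm ?_ ?_
    · calc (convY N).rank ≤ (replicateCol (Fin 1) v).rank := by rw [hY]; exact rank_mul_le_left _ _
        _ ≤ 1 := by simpa using rank_le_card_width (replicateCol (Fin 1) v)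
    · rw [Nat.one_le_iff_ne_zero, Matrix.rank, Ne, Submodule.finrank_eq_zero,
        LinearMap.range_eq_bot]
      intro h
      set p0 : Fin N × (Fin N × Fin N) := (⟨0, hN⟩, (⟨0, hN⟩, ⟨0, hN⟩)) with hp0
      have h1 : (convY N).mulVec (Pi.single p0 1) p0 = 0 := by
        rw [show (convY N).mulVec = (convY N).mulVecLin from rfl, h]; rfl
      rw [mulVec_single] at h1
      simp only [convY, of_apply, hp0, convVec_apply, mul_one] at h1
      norm_num [Fin.ext_iff, Fin.sub_def] at h1
  · intro A B i j
    have hW : (vecMulVec (convVec N i) (convVec N j))ᴴ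
        = vecMulVec (convVec N j) (convVec N i) := by
      ext p q
      simp [vecMulVec_apply, conjTranspose_apply, star_convVec, mul_comm]
    rw [hW]
    simp only [Matrix.trace, Matrix.diag, mul_apply, vecMulVec_apply, kroneckerMap_apply,
      matConv, Matrix.of_apply, convVec_apply, Fintype.sum_prod_type]
    simp [ite_and, Finset.sum_ite_eq', mul_ite, ite_mul, Finset.mul_sum, Finset.sum_mul,
      mul_comm, mul_assoc, mul_left_comm]
    refine Finset.sum_congr rfl fun k _ => ?_
    by_cases hk : k ≤ i
    · simp only [hk, if_true]
      rw [Finset.sum_comm]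
      refine Finset.sum_congr rfl fun l _ => ?_
      by_cases hl : l ≤ j <;> simp [hl, Finset.sum_ite_eq']
    · simp [hk]
end

section
/- Fix integers m, n, N, β ≥ 1. Let v_1, …, v_N ∈ ℂ^{mn}, not all zero, and set C_i := vec^{−1}(v_i) ∈ ℂ^{n×m} and Y_{ij} := v_i v_j* for 1 ≤ i, j ≤ N, with induced product (A⋆B)_{ij} := tr((A⊗B) Y_{ij}*). Let 𝐫 := max{ rk X : X ∈ span_ℂ{C_1, …, C_N} }. Then for all nonzero A ∈ ℂ^{m×β} and B ∈ ℂ^{n×β}, one has AA* ⋆ BB* ≽ (1/min(rk AA*, rk BB*, 𝐫)) · ρ ρ* ≽ 0, where ρ ∈ ℂ^N is the vector with entries ρ_i := v_i* vec(BA^T). -/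
open Matrix Kronecker ComplexOrder

/-- Frobenius norm squared as a complex trace. -/
lemma frob_eq_trace {ι κ : Type*} [Fintype ι] [Fintype κ] (M : Matrix ι κ ℂ) :
    ((∑ i, ∑ j, Complex.normSq (M i j) : ℝ) : ℂ) = (Mᴴ * M).trace := by
  rw [Matrix.trace]
  push_cast
  rw [Finset.sum_comm]
  refine Finset.sum_congr rfl fun i _ => ?_
  rw [Matrix.diag_apply, Matrix.mul_apply]
  refine Finset.sum_congr rfl fun j _ => ?_
  simp [Matrix.conjTranspose_apply, Complex.normSq_eq_conj_mul_self, Complex.star_def]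

/-- Key inequality: `|tr F|² ≤ rank F * ‖F‖_F²`. -/
lemma trace_normSq_le_rank_mul_frob {β : ℕ} (F : Matrix (Fin β) (Fin β) ℂ) :
    Complex.normSq F.trace ≤ (F.rank : ℝ) * ∑ p, ∑ q, Complex.normSq (F p q) := by
  classical
  have hG : (F * Fᴴ).IsHermitian := Matrix.isHermitian_mul_conjTranspose_self F
  set c : Fin β → Fin β → ℂ := fun k => ⇑(hG.eigenvectorBasis k) with hc
  set U : Matrix (Fin β) (Fin β) ℂ := Matrix.of fun p k => c k p with hUdef
  have hU : Uᴴ * U = 1 := by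
    ext k l
    have h := orthonormal_iff_ite.mp hG.eigenvectorBasis.orthonormal k l
    rw [PiLp.inner_apply] at h
    simp only [RCLike.inner_apply] at h
    simp only [hUdef, Matrix.mul_apply, Matrix.conjTranspose_apply, Matrix.of_apply,
      Matrix.one_apply]
    simpa [hc, mul_comm] using h
  have hU' : U * Uᴴ = 1 := mul_eq_one_comm.mp hU
  set T : Matrix (Fin β) (Fin β) ℂ := Uᴴ * F * U with hT
  have htr : F.trace = ∑ k, T k k := by
    have : T.trace = F.trace := by
      rw [hT, Matrix.trace_mul_cycle, hU', Matrix.one_mul]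
    rw [← this, Matrix.trace]
    rfl
  have hfrob : (∑ k, ∑ l, Complex.normSq (T k l)) = ∑ p, ∑ q, Complex.normSq (F p q) := by
    have h1 : Tᴴ * T = Uᴴ * (Fᴴ * F) * U := by
      rw [hT]
      simp only [Matrix.conjTranspose_mul, Matrix.conjTranspose_conjTranspose, Matrix.mul_assoc]
      rw [← Matrix.mul_assoc U Uᴴ, hU', Matrix.one_mul]
    have h2 : (Tᴴ * T).trace = (Fᴴ * F).trace := by
      rw [h1, Matrix.trace_mul_cycle, hU', Matrix.one_mul]
    have h3 := (frob_eq_trace T).trans (h2.trans (frob_eq_trace F).symm)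
    exact_mod_cast h3
  have hdiag : ∀ k, hG.eigenvalues k = 0 → T k k = 0 := by
    intro k hk
    have hmv : (F * Fᴴ) *ᵥ c k = 0 := by
      have h := hG.mulVec_eigenvectorBasis k
      rw [hk] at h
      rw [hc]
      rw [h, zero_smul]
    have hy : Fᴴ *ᵥ c k = 0 := by
      have h0 : star (Fᴴ *ᵥ c k) ⬝ᵥ (Fᴴ *ᵥ c k) = 0 := by
        rw [Matrix.star_mulVec, Matrix.conjTranspose_conjTranspose,
          ← Matrix.dotProduct_mulVec, Matrix.mulVec_mulVec, hmv]
        simp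
      exact dotProduct_star_self_eq_zero.mp h0
    have hTkk : T k k = star (Fᴴ *ᵥ c k) ⬝ᵥ c k := by
      rw [hT, Matrix.mul_assoc, Matrix.mul_apply]
      simp only [Matrix.conjTranspose_apply, Matrix.mul_apply, Matrix.of_apply, hUdef,
        dotProduct, Matrix.mulVec, Pi.star_apply, star_sum, star_mul', star_star,
        Finset.mul_sum, Finset.sum_mul]
      rw [Finset.sum_comm]
      refine Finset.sum_congr rfl fun q _ => ?_
      refine Finset.sum_congr rfl fun p _ => ?_
      ring
    rw [hTkk, hy]
    simp
  set w : Fin β → ℝ := fun k => if hG.eigenvalues k = 0 then 0 else 1 with hw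
  have habs : ‖F.trace‖ ≤ ∑ k, w k * ‖(T k k)‖ := by
    rw [htr]
    refine (norm_sum_le _ _).trans ?_
    refine Finset.sum_le_sum fun k _ => ?_
    by_cases h : hG.eigenvalues k = 0
    · rw [hdiag k h]
      simp [hw, h]
    · simp [hw, h]
  have hCS : (∑ k, w k * ‖(T k k)‖) ^ 2 ≤
      (∑ k, w k ^ 2) * ∑ k, ‖(T k k)‖ ^ 2 :=
    Finset.sum_mul_sq_le_sq_mul_sq _ _ _
  have hwsum : (∑ k, w k ^ 2) = (F.rank : ℝ) := by
    have h1 : (∑ k, w k ^ 2) = ((Finset.univ.filter fun k => hG.eigenvalues k ≠ 0).card : ℝ) := by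
      rw [Finset.card_filter]
      push_cast
      refine Finset.sum_congr rfl fun k _ => ?_
      by_cases h : hG.eigenvalues k = 0 <;> simp [hw, h]
    rw [h1]
    congr 1
    rw [← Matrix.rank_self_mul_conjTranspose, hG.rank_eq_card_non_zero_eigs]
    simp [Fintype.card_subtype]
  have hdsum : (∑ k, ‖(T k k)‖ ^ 2) ≤ ∑ p, ∑ q, Complex.normSq (F p q) := by
    rw [← hfrob]
    refine Finset.sum_le_sum fun k _ => ?_
    rw [Complex.sq_norm]
    exact Finset.single_le_sum (fun l _ => Complex.normSq_nonneg _) (Finset.mem_univ k)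
  have h4 : Complex.normSq F.trace ≤ (∑ k, w k * ‖(T k k)‖) ^ 2 := by
    rw [← Complex.sq_norm]
    exact pow_le_pow_left₀ (norm_nonneg _) habs 2
  calc Complex.normSq F.trace ≤ (∑ k, w k * ‖(T k k)‖) ^ 2 := h4
    _ ≤ (∑ k, w k ^ 2) * ∑ k, ‖(T k k)‖ ^ 2 := hCS
    _ = (F.rank : ℝ) * ∑ k, ‖(T k k)‖ ^ 2 := by rw [hwsum]
    _ ≤ (F.rank : ℝ) * ∑ p, ∑ q, Complex.normSq (F p q) :=
        mul_le_mul_of_nonneg_left hdsum (Nat.cast_nonneg _)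

/-- A nonzero matrix has positive rank. -/
lemma one_le_rank_of_ne_zero {ι κ : Type*} [Fintype ι] [Fintype κ] [DecidableEq κ]
    (M : Matrix ι κ ℂ) (h : M ≠ 0) : 1 ≤ M.rank := by
  rw [Nat.one_le_iff_ne_zero]
  intro h0
  apply h
  have hbot : LinearMap.range M.mulVecLin = ⊥ := Submodule.finrank_eq_zero.mp h0
  have hmv : M.mulVecLin = 0 := LinearMap.range_eq_bot.mp hbot
  ext i j
  have h1 : M *ᵥ Pi.single j 1 = 0 := by
    have := congrArg (fun f => f (Pi.single j (1 : ℂ))) hmv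
    simpa [Matrix.mulVecLin_apply] using this
  have := congrFun h1 i
  simpa using this

/-- trace of product against a rank-one matrix is a sandwich. -/
lemma trace_vecMulVec_eq {α ι : Type*} [Fintype α] [Fintype ι] (K : Matrix α α ℂ)
    (v : ι → α → ℂ) :
    (Matrix.of fun i j : ι => (K * (vecMulVec (v i) (star (v j)))ᴴ).trace) =
      (Matrix.of fun a i => v i a)ᴴ * K * (Matrix.of fun a i => v i a) := by
  ext i j
  rw [Matrix.of_apply, Matrix.trace, Matrix.mul_apply]
  simp only [Matrix.diag_apply, Matrix.mul_apply, Matrix.conjTranspose_apply, Matrix.of_apply,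
    vecMulVec_apply, Pi.star_apply, star_mul', star_star, Finset.sum_mul, Finset.mul_sum]
  rw [Finset.sum_comm]
  refine Finset.sum_congr rfl fun a _ => ?_
  refine Finset.sum_congr rfl fun b _ => ?_
  ring

/-- the rank-one matrix `ρρ*` as a sandwich. -/
lemma vecMulVec_dot_eq {α ι : Type*} [Fintype α] [Fintype ι] (u : α → ℂ) (v : ι → α → ℂ) :
    vecMulVec (fun i => star (v i) ⬝ᵥ u) (star fun i => star (v i) ⬝ᵥ u) =
      (Matrix.of fun a i => v i a)ᴴ * vecMulVec u (star u) * (Matrix.of fun a i => v i a) := by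
  ext i j
  have hL : vecMulVec (fun i => star (v i) ⬝ᵥ u) (star fun i => star (v i) ⬝ᵥ u) i j
      = ∑ a, ∑ b, star (v i b) * u b * (v j a * star (u a)) := by
    simp only [vecMulVec_apply, Pi.star_apply, dotProduct, star_sum, star_mul', star_star,
      Finset.sum_mul, Finset.mul_sum]
    try exact Finset.sum_congr rfl fun a _ => Finset.sum_congr rfl fun b _ => by ring
  have hR : ((Matrix.of fun a i => v i a)ᴴ * vecMulVec u (star u) *
        (Matrix.of fun a i => v i a)) i j
      = ∑ a, ∑ b, star (v i b) * u b * (v j a * star (u a)) := by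
    simp only [Matrix.mul_apply, Matrix.conjTranspose_apply, Matrix.of_apply, vecMulVec_apply,
      Pi.star_apply, Finset.sum_mul, Finset.mul_sum]
    exact Finset.sum_congr rfl fun a _ => Finset.sum_congr rfl fun b _ => by ring
  rw [hL, hR]

lemma quad_sandwich {α ι : Type*} [Fintype α] [Fintype ι] (K : Matrix α α ℂ)
    (V : Matrix α ι ℂ) (x : ι → ℂ) :
    star x ⬝ᵥ ((Vᴴ * K * V) *ᵥ x) = star (V *ᵥ x) ⬝ᵥ (K *ᵥ (V *ᵥ x)) := by
  rw [← Matrix.mulVec_mulVec, ← Matrix.mulVec_mulVec, Matrix.dotProduct_mulVec (star x),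
    ← Matrix.star_mulVec]

lemma quad_gram {α γ : Type*} [Fintype α] [Fintype γ] (S : Matrix α γ ℂ) (w : α → ℂ) :
    star w ⬝ᵥ ((S * Sᴴ) *ᵥ w) = star (Sᴴ *ᵥ w) ⬝ᵥ (Sᴴ *ᵥ w) := by
  calc star w ⬝ᵥ ((S * Sᴴ) *ᵥ w) = star w ⬝ᵥ (S *ᵥ (Sᴴ *ᵥ w)) := by rw [Matrix.mulVec_mulVec]
    _ = (star w ᵥ* S) ⬝ᵥ (Sᴴ *ᵥ w) := Matrix.dotProduct_mulVec _ _ _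
    _ = star (Sᴴ *ᵥ w) ⬝ᵥ (Sᴴ *ᵥ w) := by
        rw [Matrix.star_mulVec, Matrix.conjTranspose_conjTranspose]

lemma quad_rank_one {α : Type*} [Fintype α] (u a : α → ℂ) :
    star a ⬝ᵥ ((vecMulVec u (star u)) *ᵥ a) = star (star u ⬝ᵥ a) * (star u ⬝ᵥ a) := by
  simp only [Matrix.mulVec, dotProduct, vecMulVec_apply, Pi.star_apply, star_sum,
    star_mul', star_star, Finset.mul_sum, Finset.sum_mul]
  rw [Finset.sum_comm]
  refine Finset.sum_congr rfl fun p _ => ?_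
  refine Finset.sum_congr rfl fun q _ => ?_
  ring

lemma dot_star_self_eq_normSq {α : Type*} [Fintype α] (y : α → ℂ) :
    star y ⬝ᵥ y = ((∑ i, Complex.normSq (y i) : ℝ) : ℂ) := by
  rw [dotProduct]
  push_cast
  refine Finset.sum_congr rfl fun i _ => ?_
  simp [Complex.normSq_eq_conj_mul_self, Complex.star_def]

lemma conjTranspose_kron (m n β : ℕ) (A : Matrix (Fin m) (Fin β) ℂ)
    (B : Matrix (Fin n) (Fin β) ℂ) : (A ⊗ₖ B)ᴴ = Aᴴ ⊗ₖ Bᴴ := by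
  ext kl qp
  simp [Matrix.conjTranspose_apply, kroneckerMap_apply, star_mul', mul_comm]

/-- lower bound for a rank-one product `⋆` given by `Y_{ij} = v_i v_j*`:
for nonzero `A, B`, `AA* ⋆ BB* ≽ (1/min(rk AA*, rk BB*, 𝐫)) ρρ* ≽ 0` where
`ρ_i = v_i* vec(BAᵀ)`, `C_i = vec⁻¹(v_i)` and
`𝐫 = max{rk X : X ∈ span{C_1,…,C_N}}`.  Here indices `Fin m × Fin n` encode the
1-based `n(i−1)+p`, `vec(P) (j,i) = P i j`, and `(A ⋆ B)_{ij} = tr((A⊗B) Y_{ij}*)`. -/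
theorem rank_one_prod_lower_bound (m n N β : ℕ)
    (hm : 1 ≤ m) (hn : 1 ≤ n) (hN : 1 ≤ N) (hβ : 1 ≤ β)
    (v : Fin N → Fin m × Fin n → ℂ) (hv : v ≠ 0)
    (C : Fin N → Matrix (Fin n) (Fin m) ℂ) (hC : ∀ i p q, C i p q = v i (q, p))
    (rstar : ℕ)
    (hrstar : rstar =
      sSup {t : ℕ | ∃ X ∈ Submodule.span ℂ (Set.range C), Matrix.rank X = t})
    (A : Matrix (Fin m) (Fin β) ℂ) (B : Matrix (Fin n) (Fin β) ℂ)
    (hA : A ≠ 0) (hB : B ≠ 0) :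
    ((Matrix.of fun i j : Fin N =>
        Matrix.trace (((A * Aᴴ) ⊗ₖ (B * Bᴴ)) * (vecMulVec (v i) (star (v j)))ᴴ)) -
      (((min (min (A * Aᴴ).rank (B * Bᴴ).rank) rstar : ℕ) : ℂ))⁻¹ •
        vecMulVec
          (fun i : Fin N => star (v i) ⬝ᵥ (fun p : Fin m × Fin n => (B * Aᵀ) p.2 p.1))
          (star fun i : Fin N =>
            star (v i) ⬝ᵥ (fun p : Fin m × Fin n => (B * Aᵀ) p.2 p.1))).PosSemidef ∧
    (vecMulVec
        (fun i : Fin N => star (v i) ⬝ᵥ (fun p : Fin m × Fin n => (B * Aᵀ) p.2 p.1))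
        (star fun i : Fin N =>
          star (v i) ⬝ᵥ (fun p : Fin m × Fin n => (B * Aᵀ) p.2 p.1))).PosSemidef := by
  classical
  -- abbreviations
  set V : Matrix (Fin m × Fin n) (Fin N) ℂ := Matrix.of fun a i => v i a with hV
  set S : Matrix (Fin m × Fin n) (Fin β × Fin β) ℂ := A ⊗ₖ B with hS
  set u : Fin m × Fin n → ℂ := fun p => (B * Aᵀ) p.2 p.1 with hu
  set e : Fin β × Fin β → ℂ := fun kl => if kl.1 = kl.2 then 1 else 0 with he
  set cm : ℕ := min (min (A * Aᴴ).rank (B * Bᴴ).rank) rstar with hcm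
  -- the kronecker product factors
  have hK : ((A * Aᴴ) ⊗ₖ (B * Bᴴ)) = S * Sᴴ := by
    rw [hS, Matrix.mul_kronecker_mul, conjTranspose_kron]
  -- u = S *ᵥ e
  have hue : u = S *ᵥ e := by
    funext p
    rw [hu, hS, he]
    simp only [Matrix.mulVec, dotProduct, kroneckerMap_apply, Matrix.mul_apply,
      Matrix.transpose_apply]
    rw [Fintype.sum_prod_type]
    simp only [mul_ite, mul_one, mul_zero, Finset.sum_ite_eq, Finset.mem_univ, if_true]
    exact Finset.sum_congr rfl fun k _ => mul_comm _ _
  -- Hermiticity of the rank-one middle matrix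
  have hUu : (vecMulVec u (star u)).IsHermitian := by
    ext p q
    simp only [Matrix.conjTranspose_apply, vecMulVec_apply, Pi.star_apply, star_mul', star_star]
    ring
  have hUuPSD : (vecMulVec u (star u)).PosSemidef := by
    rw [vecMulVec_eq Unit, ← Matrix.conjTranspose_replicateCol]
    exact Matrix.posSemidef_self_mul_conjTranspose _
  -- bddAbove for the rank set
  have hbdd : BddAbove {t : ℕ | ∃ X ∈ Submodule.span ℂ (Set.range C), Matrix.rank X = t} := by
    refine ⟨n, fun t ht => ?_⟩
    obtain ⟨X, -, rfl⟩ := ht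
    simpa using X.rank_le_card_height
  have hrank_le_rstar : ∀ X ∈ Submodule.span ℂ (Set.range C), Matrix.rank X ≤ rstar :=
    fun X hX => hrstar ▸ le_csSup hbdd ⟨X, hX, rfl⟩
  -- 1 ≤ cm
  have hcm1 : 1 ≤ cm := by
    obtain ⟨i0, hi0⟩ := Function.ne_iff.mp hv
    have hCi : C i0 ≠ 0 := by
      intro h
      apply hi0
      funext p
      have := congrFun (congrFun h p.2) p.1
      rw [hC] at this
      simpa using this
    refine le_min (le_min ?_ ?_) ?_
    · rw [Matrix.rank_self_mul_conjTranspose]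
      exact one_le_rank_of_ne_zero A hA
    · rw [Matrix.rank_self_mul_conjTranspose]
      exact one_le_rank_of_ne_zero B hB
    · exact le_trans (one_le_rank_of_ne_zero (C i0) hCi)
        (hrank_le_rstar (C i0) (Submodule.subset_span ⟨i0, rfl⟩))
  have hcmC : ((cm : ℂ))⁻¹ = (((cm : ℝ)⁻¹ : ℝ) : ℂ) := by push_cast; ring
  have hcmR : (0 : ℝ) < (cm : ℝ) := by exact_mod_cast hcm1
  -- the sandwich identities
  have hM := trace_vecMulVec_eq ((A * Aᴴ) ⊗ₖ (B * Bᴴ)) v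
  have hρ := vecMulVec_dot_eq u v
  -- positivity of the quadratic form of the difference, for every x
  have hquad : ∀ x : Fin N → ℂ,
      0 ≤ star x ⬝ᵥ ((Vᴴ * (S * Sᴴ) * V - ((cm : ℂ))⁻¹ • (Vᴴ * vecMulVec u (star u) * V)) *ᵥ x) := by
    intro x
    set w : Fin m × Fin n → ℂ := V *ᵥ x with hw
    set y : Fin β × Fin β → ℂ := Sᴴ *ᵥ w with hy
    set Fm : Matrix (Fin β) (Fin β) ℂ := Matrix.of fun l k => y (k, l) with hFm
    set X : Matrix (Fin n) (Fin m) ℂ := Matrix.of fun p q => w (q, p) with hX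
    -- Fm as a matrix product
    have hFmP : Fm = Bᴴ * (X * (Aᴴ)ᵀ) := by
      ext l k
      rw [hFm, Matrix.of_apply, hy, hS]
      simp only [Matrix.mulVec, dotProduct, Matrix.conjTranspose_apply,
        Matrix.transpose_apply, Matrix.mul_apply, kroneckerMap_apply, star_mul',
        Matrix.of_apply, Finset.sum_mul, Finset.mul_sum, hX]
      rw [Fintype.sum_prod_type]
      rw [Finset.sum_comm]
      refine Finset.sum_congr rfl fun p _ => ?_
      refine Finset.sum_congr rfl fun q _ => ?_
      ring
    -- X is in the span of the C i
    have hXmem : X ∈ Submodule.span ℂ (Set.range C) := by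
      have hXeq : X = ∑ i, x i • C i := by
        ext p q
        rw [hX, Matrix.of_apply, hw, hV]
        simp only [Matrix.mulVec, dotProduct, Matrix.of_apply, Finset.sum_apply,
          Matrix.sum_apply, Matrix.smul_apply, smul_eq_mul, hC]
        exact Finset.sum_congr rfl fun i _ => mul_comm _ _
      rw [hXeq]
      exact Submodule.sum_mem _ fun i _ =>
        Submodule.smul_mem _ _ (Submodule.subset_span ⟨i, rfl⟩)
    -- rank of Fm is at most cm
    have hrank : Fm.rank ≤ cm := by
      refine le_min (le_min ?_ ?_) ?_
      · rw [Matrix.rank_self_mul_conjTranspose, hFmP, ← Matrix.mul_assoc]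
        calc ((Bᴴ * X) * (Aᴴ)ᵀ).rank ≤ ((Aᴴ)ᵀ).rank := Matrix.rank_mul_le_right _ _
          _ = A.rank := by rw [Matrix.rank_transpose, Matrix.rank_conjTranspose]
      · rw [Matrix.rank_self_mul_conjTranspose, hFmP]
        calc (Bᴴ * (X * (Aᴴ)ᵀ)).rank ≤ (Bᴴ).rank := Matrix.rank_mul_le_left _ _
          _ = B.rank := Matrix.rank_conjTranspose _
      · refine le_trans ?_ (hrank_le_rstar X hXmem)
        rw [hFmP]
        calc (Bᴴ * (X * (Aᴴ)ᵀ)).rank ≤ (X * (Aᴴ)ᵀ).rank := Matrix.rank_mul_le_right _ _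
          _ ≤ X.rank := Matrix.rank_mul_le_left _ _
    -- trace of Fm is the relevant scalar
    have hτ : star u ⬝ᵥ w = Fm.trace := by
      rw [hue, Matrix.star_mulVec, ← Matrix.dotProduct_mulVec, ← hy, Matrix.trace]
      rw [dotProduct, Fintype.sum_prod_type]
      simp only [Pi.star_apply, he, Matrix.diag_apply, hFm, Matrix.of_apply]
      refine Finset.sum_congr rfl fun k _ => ?_
      simp [apply_ite, Finset.sum_ite_eq, ite_mul]
    -- expand the quadratic form
    rw [Matrix.sub_mulVec, dotProduct_sub, Matrix.smul_mulVec,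
      dotProduct_smul, quad_sandwich, quad_sandwich, quad_rank_one, ← hw, quad_gram, ← hy]
    rw [hτ, dot_star_self_eq_normSq]
    have hstar : star Fm.trace * Fm.trace = ((Complex.normSq Fm.trace : ℝ) : ℂ) := by
      rw [Complex.star_def]
      exact_mod_cast (Complex.normSq_eq_conj_mul_self).symm
    rw [hstar, hcmC, smul_eq_mul, ← Complex.ofReal_mul, ← Complex.ofReal_sub,
      Complex.zero_le_real, sub_nonneg]
    -- the real inequality
    have hfr : (∑ i, Complex.normSq (y i)) = ∑ p, ∑ q, Complex.normSq (Fm p q) := by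
      rw [Fintype.sum_prod_type, Finset.sum_comm]
      refine Finset.sum_congr rfl fun l _ => Finset.sum_congr rfl fun k _ => ?_
      rw [hFm]
      rfl
    rw [hfr]
    have h1 : Complex.normSq Fm.trace ≤ (cm : ℝ) * ∑ p, ∑ q, Complex.normSq (Fm p q) := by
      refine le_trans (trace_normSq_le_rank_mul_frob Fm) ?_
      refine mul_le_mul_of_nonneg_right ?_ ?_
      · exact_mod_cast hrank
      · exact Finset.sum_nonneg fun p _ => Finset.sum_nonneg fun q _ => Complex.normSq_nonneg _
    calc (cm : ℝ)⁻¹ * Complex.normSq Fm.trace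
        ≤ (cm : ℝ)⁻¹ * ((cm : ℝ) * ∑ p, ∑ q, Complex.normSq (Fm p q)) :=
          mul_le_mul_of_nonneg_left h1 (inv_nonneg.mpr hcmR.le)
      _ = ∑ p, ∑ q, Complex.normSq (Fm p q) := by
          rw [← mul_assoc, inv_mul_cancel₀ hcmR.ne', one_mul]
  -- Hermiticity pieces
  have hherm1 : (Vᴴ * (S * Sᴴ) * V).IsHermitian :=
    Matrix.isHermitian_conjTranspose_mul_mul V (Matrix.isHermitian_mul_conjTranspose_self S)
  have hherm2 : (Vᴴ * vecMulVec u (star u) * V).IsHermitian :=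
    Matrix.isHermitian_conjTranspose_mul_mul V hUu
  have hsstar : star ((cm : ℂ))⁻¹ = ((cm : ℂ))⁻¹ := by
    rw [star_inv₀]
    norm_cast
  have hherm3 : (((cm : ℂ))⁻¹ • (Vᴴ * vecMulVec u (star u) * V)).IsHermitian := by
    rw [Matrix.IsHermitian, Matrix.conjTranspose_smul, hsstar, hherm2.eq]
  constructor
  · rw [hM, hρ, hK]
    exact Matrix.posSemidef_iff_dotProduct_mulVec.mpr ⟨hherm1.sub hherm3, hquad⟩
  · rw [hρ]
    exact hUuPSD.conjTranspose_mul_mul_same _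
end

section
/- Fix integers m, n, N, α, β ≥ 1. Let v_{i,k} ∈ ℂ^{mn} for 1 ≤ i ≤ N, 1 ≤ k ≤ α, and suppose Y = (Y_{ij})_{i,j=1}^{N} is the block matrix with Y_{ij} := Σ_{k=1}^{α} v_{i,k} v_{j,k}*, with induced product (A⋆B)_{ij} := tr((A⊗B) Y_{ij}*). For each k set C_{i,k} := vec^{−1}(v_{i,k}) ∈ ℂ^{n×m} and 𝐫(k) := max{ rk X : X ∈ span_ℂ{C_{1,k}, …, C_{N,k}} }. Then for all nonzero A ∈ ℂ^{m×β} and B ∈ ℂ^{n×β}, one has AA* ⋆ BB* ≽ Σ_{k=1}^{α} (1/min(rk AA*, rk BB*, 𝐫(k))) · ρ_k ρ_k* ≽ 0, where ρ_k ∈ ℂ^N has entries (ρ_k)_i := v_{i,k}* vec(BA^T), and a summand with all v_{i,k} = 0 (so 𝐫(k) = 0 and ρ_k = 0) is interpreted as the zero matrix. -/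
open Matrix Kronecker ComplexOrder



/-- trace of `M * Mᴴ` is the (real) squared Frobenius norm. -/
lemma trace_mul_conjTranspose_self_eq {a b : Type*} [Fintype a] [Fintype b]
    (M : Matrix a b ℂ) :
    (M * Mᴴ).trace = ((∑ p : a × b, Complex.normSq (M p.1 p.2) : ℝ) : ℂ) := by
  simp only [Matrix.trace, Matrix.diag, Matrix.mul_apply, Matrix.conjTranspose_apply]
  push_cast
  rw [Fintype.sum_prod_type]
  refine Finset.sum_congr rfl fun i _ => Finset.sum_congr rfl fun j _ => ?_
  simp [Complex.star_def, Complex.mul_conj]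

/-- Key inequality: `|tr M|² ≤ rk M * ‖M‖_F²`. -/
lemma normSq_trace_le (d : ℕ) (M : Matrix (Fin d) (Fin d) ℂ) :
    Complex.normSq M.trace ≤
      (M.rank : ℝ) * ∑ p : Fin d × Fin d, Complex.normSq (M p.1 p.2) := by
  classical
  set E := EuclideanSpace ℂ (Fin d)
  set U : Submodule ℂ E := LinearMap.range (Matrix.toEuclideanLin M) with hU
  have hrank : M.rank = Module.finrank ℂ U := by
    rw [hU, Matrix.toEuclideanLin_eq_toLin]
    exact Matrix.rank_eq_finrank_range_toLin M _ _
  set P : E →L[ℂ] E := U.subtypeL.comp (U.orthogonalProjection) with hP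
  have hproj : LinearMap.IsProj U (P : E →ₗ[ℂ] E) := by
    constructor
    · intro x; exact (U.orthogonalProjection x).2
    · intro x hx
      show (U.subtypeL (U.orthogonalProjection x) : E) = x
      exact Submodule.starProjection_eq_self_iff.mpr hx
  set Q : Matrix (Fin d) (Fin d) ℂ := Matrix.toEuclideanLin.symm (P : E →ₗ[ℂ] E) with hQ
  have hQlin : Matrix.toEuclideanLin Q = (P : E →ₗ[ℂ] E) := by
    rw [hQ, LinearEquiv.apply_symm_apply]
  have hQM : Q * M = M := by
    apply Matrix.toEuclideanLin.injective
    rw [Matrix.toEuclideanLin_eq_toLin] at hQlin ⊢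
    rw [Matrix.toLin_mul _ (PiLp.basisFun 2 ℂ (Fin d)) _, hQlin]
    refine LinearMap.ext fun x => ?_
    exact hproj.map_id _ (LinearMap.mem_range_self _ x)
  have hQQ : Q * Q = Q := by
    apply Matrix.toEuclideanLin.injective
    rw [Matrix.toEuclideanLin_eq_toLin] at hQlin ⊢
    rw [Matrix.toLin_mul _ (PiLp.basisFun 2 ℂ (Fin d)) _, hQlin]
    refine LinearMap.ext fun x => ?_
    exact hproj.map_id _ (hproj.map_mem x)
  have hQH : Q.IsHermitian := by
    rw [Matrix.isHermitian_iff_isSymmetric, hQlin]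
    exact ContinuousLinearMap.isSelfAdjoint_iff_isSymmetric.mp
      (isSelfAdjoint_starProjection U)
  have htrQ : Q.trace = (M.rank : ℂ) := by
    have h1 : LinearMap.trace ℂ E (P : E →ₗ[ℂ] E) = (Module.finrank ℂ U : ℂ) :=
      hproj.trace
    rw [LinearMap.trace_eq_matrix_trace ℂ (PiLp.basisFun 2 ℂ (Fin d))] at h1
    have h2 : LinearMap.toMatrix (PiLp.basisFun 2 ℂ (Fin d)) (PiLp.basisFun 2 ℂ (Fin d))
        (P : E →ₗ[ℂ] E) = Q := by
      apply_fun (Matrix.toLin (PiLp.basisFun 2 ℂ (Fin d)) (PiLp.basisFun 2 ℂ (Fin d)))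
        using (Matrix.toLin _ _).injective
      rw [Matrix.toLin_toMatrix, ← Matrix.toEuclideanLin_eq_toLin, hQlin]
    rw [h2] at h1
    rw [h1, hrank]
  set qv : EuclideanSpace ℂ (Fin d × Fin d) := WithLp.toLp 2 (fun p : Fin d × Fin d => Q p.1 p.2) with hqv
  set mv : EuclideanSpace ℂ (Fin d × Fin d) := WithLp.toLp 2 (fun p : Fin d × Fin d => M p.1 p.2) with hmv
  have hinner : ∀ xv yv : EuclideanSpace ℂ (Fin d × Fin d),
      (inner ℂ xv yv : ℂ) = ∑ p : Fin d × Fin d, (starRingEnd ℂ) (xv p) * yv p := by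
    intro xv yv
    simp [PiLp.inner_apply, RCLike.inner_apply, mul_comm]
  have hconj : ∀ i j, (starRingEnd ℂ) (Q i j) = Q j i := by
    intro i j
    conv_rhs => rw [← hQH]
    simp [Matrix.conjTranspose_apply]
  have h1 : (inner ℂ qv mv : ℂ) = M.trace := by
    conv_rhs => rw [← hQM]
    rw [hinner]
    simp only [hqv, hmv, PiLp.toLp_apply, Matrix.trace, Matrix.diag, Matrix.mul_apply]
    rw [Fintype.sum_prod_type, Finset.sum_comm]
    exact Finset.sum_congr rfl fun j _ => Finset.sum_congr rfl fun i _ => by rw [hconj]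
  have h2 : (inner ℂ qv qv : ℂ) = (M.rank : ℂ) := by
    rw [← htrQ]
    conv_rhs => rw [← hQQ]
    rw [hinner]
    simp only [hqv, PiLp.toLp_apply, Matrix.trace, Matrix.diag, Matrix.mul_apply]
    rw [Fintype.sum_prod_type, Finset.sum_comm]
    exact Finset.sum_congr rfl fun j _ => Finset.sum_congr rfl fun i _ => by rw [hconj]
  have h3 : (inner ℂ mv mv : ℂ) =
      ((∑ p : Fin d × Fin d, Complex.normSq (M p.1 p.2) : ℝ) : ℂ) := by
    rw [hinner]
    push_cast
    exact Finset.sum_congr rfl fun p _ => (Complex.normSq_eq_conj_mul_self).symm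
  have hq : ‖qv‖ ^ 2 = (M.rank : ℝ) := by
    rw [@norm_sq_eq_re_inner ℂ, h2]
    simp
  have hm3 : ‖mv‖ ^ 2 = ∑ p : Fin d × Fin d, Complex.normSq (M p.1 p.2) := by
    rw [@norm_sq_eq_re_inner ℂ, h3]
    simp
  have hcs := norm_inner_le_norm (𝕜 := ℂ) qv mv
  calc Complex.normSq M.trace = ‖(inner ℂ qv mv : ℂ)‖ ^ 2 := by
        rw [h1, ← Complex.sq_norm]
    _ ≤ (‖qv‖ * ‖mv‖) ^ 2 := pow_le_pow_left₀ (norm_nonneg _) hcs 2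
    _ = ‖qv‖ ^ 2 * ‖mv‖ ^ 2 := mul_pow _ _ 2
    _ = (M.rank : ℝ) * ∑ p : Fin d × Fin d, Complex.normSq (M p.1 p.2) := by
        rw [hq, hm3]

/-- PSD of `(t : ℂ)⁻¹ • ρ ρ*`. -/
lemma smul_vecMulVec_psd {N : ℕ} (ρv : Fin N → ℂ) (t : ℕ) :
    (((t : ℂ))⁻¹ • vecMulVec ρv (star ρv)).PosSemidef := by
  have h1 : (vecMulVec ρv (star ρv)).PosSemidef := by
    rw [Matrix.vecMulVec_eq Unit, ← Matrix.conjTranspose_replicateCol]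
    exact Matrix.posSemidef_self_mul_conjTranspose _
  have hcast : ((t : ℂ))⁻¹ = ((((t : ℝ))⁻¹ : ℝ) : ℂ) := by
    rw [Complex.ofReal_inv, Complex.ofReal_natCast]
  rw [hcast]
  refine Matrix.PosSemidef.of_dotProduct_mulVec_nonneg ?_ ?_
  · rw [Matrix.IsHermitian, Matrix.conjTranspose_smul, h1.1.eq]
    congr 1
    simp [Complex.star_def, Complex.conj_ofReal]
  · intro x
    rw [Matrix.smul_mulVec, dotProduct_smul, smul_eq_mul]
    exact mul_nonneg (Complex.zero_le_real.2 (by positivity)) (h1.dotProduct_mulVec_nonneg x)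

/-- quadratic form of `c • ρ ρ*`. -/
lemma smul_vecMulVec_quad {N : ℕ} (ρv : Fin N → ℂ) (c : ℂ) (x : Fin N → ℂ) :
    star x ⬝ᵥ ((c • vecMulVec ρv (star ρv)) *ᵥ x) =
      c * ((star x ⬝ᵥ ρv) * (starRingEnd ℂ) (star x ⬝ᵥ ρv)) := by
  rw [Matrix.smul_mulVec, dotProduct_smul, smul_eq_mul]
  congr 1
  have h2 : (starRingEnd ℂ) (star x ⬝ᵥ ρv) = star ρv ⬝ᵥ x := by
    simp [dotProduct, map_sum, mul_comm]
  rw [h2]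
  simp only [dotProduct, Matrix.mulVec, vecMulVec_apply, Pi.star_apply]
  rw [Finset.sum_mul_sum]
  simp only [Finset.mul_sum]
  exact Finset.sum_congr rfl fun i _ => Finset.sum_congr rfl fun j _ => by ring

/-- trace entry computation. -/
lemma trace_entry {ι κ : Type*} [Fintype ι] [Fintype κ] (P : Matrix ι ι ℂ)
    (f g : κ → ι → ℂ) :
    Matrix.trace (P * (Matrix.of fun a b : ι => ∑ k, f k a * star (g k b))ᴴ) =
      ∑ k, star (f k) ⬝ᵥ (P *ᵥ g k) := by
  simp only [Matrix.trace, Matrix.diag, Matrix.mul_apply, Matrix.conjTranspose_apply,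
    Matrix.of_apply, star_sum, star_mul', star_star, Finset.mul_sum, dotProduct,
    Matrix.mulVec, Pi.star_apply]
  conv_lhs => enter [2, a]; rw [Finset.sum_comm]
  rw [Finset.sum_comm]
  refine Finset.sum_congr rfl fun k _ => Finset.sum_congr rfl fun a _ =>
    Finset.sum_congr rfl fun b _ => by ring

/-- Gram entry. -/
lemma gram_entry {ι N' : Type*} [Fintype ι] [Fintype N'] (P : Matrix ι ι ℂ)
    (V : Matrix ι N' ℂ) (i j : N') :
    (Vᴴ * P * V) i j = star (fun a => V a i) ⬝ᵥ (P *ᵥ fun a => V a j) := by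
  rw [Matrix.mul_assoc]
  simp only [Matrix.mul_apply, Matrix.conjTranspose_apply, dotProduct,
    Matrix.mulVec, Pi.star_apply]

/-- lower bound for a general product `⋆` given by
`Y_{ij} = Σ_{k=1}^α v_{i,k} v_{j,k}*`: for nonzero `A, B`,
`AA* ⋆ BB* ≽ Σ_k (1/min(rk AA*, rk BB*, 𝐫(k))) ρ_k ρ_k* ≽ 0`, where
`(ρ_k)_i = v_{i,k}* vec(BAᵀ)`, `C_{i,k} = vec⁻¹(v_{i,k})` and
`𝐫(k) = max{rk X : X ∈ span{C_{1,k},…,C_{N,k}}}` (a summand with all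
`v_{i,k} = 0` has `𝐫(k) = 0`, `ρ_k = 0` and is the zero matrix, matching the
Lean convention `(0 : ℂ)⁻¹ = 0`). -/
theorem general_prod_lower_bound (m n N α β : ℕ)
    (hm : 1 ≤ m) (hn : 1 ≤ n) (hN : 1 ≤ N) (hα : 1 ≤ α) (hβ : 1 ≤ β)
    (v : Fin α → Fin N → Fin m × Fin n → ℂ)
    (C : Fin α → Fin N → Matrix (Fin n) (Fin m) ℂ)
    (hC : ∀ k i p q, C k i p q = v k i (q, p))
    (r : Fin α → ℕ)
    (hr : ∀ k, r k =
      sSup {t : ℕ | ∃ X ∈ Submodule.span ℂ (Set.range (C k)), Matrix.rank X = t})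
    (A : Matrix (Fin m) (Fin β) ℂ) (B : Matrix (Fin n) (Fin β) ℂ)
    (hA : A ≠ 0) (hB : B ≠ 0) :
    ((Matrix.of fun i j : Fin N =>
        Matrix.trace (((A * Aᴴ) ⊗ₖ (B * Bᴴ)) *
          (Matrix.of fun a b : Fin m × Fin n => ∑ k, v k i a * star (v k j b))ᴴ)) -
      ∑ k : Fin α, (((min (min (A * Aᴴ).rank (B * Bᴴ).rank) (r k) : ℕ) : ℂ))⁻¹ •
        vecMulVec
          (fun i : Fin N => star (v k i) ⬝ᵥ (fun p : Fin m × Fin n => (B * Aᵀ) p.2 p.1))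
          (star fun i : Fin N =>
            star (v k i) ⬝ᵥ (fun p : Fin m × Fin n => (B * Aᵀ) p.2 p.1))).PosSemidef ∧
    (∑ k : Fin α, (((min (min (A * Aᴴ).rank (B * Bᴴ).rank) (r k) : ℕ) : ℂ))⁻¹ •
        vecMulVec
          (fun i : Fin N => star (v k i) ⬝ᵥ (fun p : Fin m × Fin n => (B * Aᵀ) p.2 p.1))
          (star fun i : Fin N =>
            star (v k i) ⬝ᵥ (fun p : Fin m × Fin n => (B * Aᵀ) p.2 p.1))).PosSemidef := by
  classical
  -- the big PSD kernel
  have hPL : (A * Aᴴ) ⊗ₖ (B * Bᴴ) = (A ⊗ₖ B) * (A ⊗ₖ B)ᴴ := by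
    have h : (A ⊗ₖ B)ᴴ = Aᴴ ⊗ₖ Bᴴ := by
      ext p q
      simp [Matrix.conjTranspose_apply, Matrix.kroneckerMap_apply, star_mul']
    rw [h, ← Matrix.mul_kronecker_mul]
  have hPpsd : ((A * Aᴴ) ⊗ₖ (B * Bᴴ)).PosSemidef := by
    rw [hPL]; exact Matrix.posSemidef_self_mul_conjTranspose _
  set V : Fin α → Matrix (Fin m × Fin n) (Fin N) ℂ :=
    fun k => Matrix.of fun a i => v k i a with hV
  set G : Fin α → Matrix (Fin N) (Fin N) ℂ :=
    fun k => (V k)ᴴ * ((A * Aᴴ) ⊗ₖ (B * Bᴴ)) * V k with hG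
  -- step: the big matrix equals ∑ k, G k
  have hMeq : (Matrix.of fun i j : Fin N =>
        Matrix.trace (((A * Aᴴ) ⊗ₖ (B * Bᴴ)) *
          (Matrix.of fun a b : Fin m × Fin n => ∑ k, v k i a * star (v k j b))ᴴ)) =
      ∑ k, G k := by
    ext i j
    rw [Matrix.of_apply, trace_entry ((A * Aᴴ) ⊗ₖ (B * Bᴴ)) (fun k => v k i) (fun k => v k j),
      Matrix.sum_apply]
    refine Finset.sum_congr rfl fun k _ => ?_
    rw [hG]
    exact (gram_entry ((A * Aᴴ) ⊗ₖ (B * Bᴴ)) (V k) i j).symm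
  -- per-k PSD of the difference
  have hkey : ∀ k : Fin α, (G k -
      (((min (min (A * Aᴴ).rank (B * Bᴴ).rank) (r k) : ℕ) : ℂ))⁻¹ •
        vecMulVec
          (fun i : Fin N => star (v k i) ⬝ᵥ (fun p : Fin m × Fin n => (B * Aᵀ) p.2 p.1))
          (star fun i : Fin N =>
            star (v k i) ⬝ᵥ (fun p : Fin m × Fin n => (B * Aᵀ) p.2 p.1))).PosSemidef := by
    intro k
    have hGpsd : (G k).PosSemidef := by
      rw [hG]; exact hPpsd.conjTranspose_mul_mul_same (V k)
    have hTk := smul_vecMulVec_psd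
      (fun i : Fin N => star (v k i) ⬝ᵥ (fun p : Fin m × Fin n => (B * Aᵀ) p.2 p.1))
      (min (min (A * Aᴴ).rank (B * Bᴴ).rank) (r k))
    refine Matrix.PosSemidef.of_dotProduct_mulVec_nonneg (hGpsd.1.sub hTk.1) ?_
    intro x
    set u : Fin m × Fin n → ℂ := V k *ᵥ x with hu
    set Cu : Matrix (Fin n) (Fin m) ℂ := Matrix.of fun q j => u (j, q) with hCu
    set M0 : Matrix (Fin β) (Fin β) ℂ := Aᵀ * Cuᴴ * B with hM0
    -- quadratic form of G k
    have hGx : star x ⬝ᵥ (G k *ᵥ x) = star u ⬝ᵥ (((A * Aᴴ) ⊗ₖ (B * Bᴴ)) *ᵥ u) := by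
      simp only [hG]
      rw [Matrix.mul_assoc, ← Matrix.mulVec_mulVec, Matrix.dotProduct_mulVec,
        ← Matrix.star_mulVec, ← Matrix.mulVec_mulVec, hu]
    -- pointwise identity for (A ⊗ₖ B)ᴴ *ᵥ u
    have hy : ((A ⊗ₖ B)ᴴ *ᵥ u) = fun st : Fin β × Fin β => (starRingEnd ℂ) (M0 st.1 st.2) := by
      funext st
      obtain ⟨s, t⟩ := st
      simp only [Matrix.mulVec, dotProduct, Matrix.conjTranspose_apply,
        Matrix.kroneckerMap_apply, hM0, Matrix.mul_apply, Matrix.transpose_apply,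
        map_sum, _root_.map_mul, star_mul', Matrix.of_apply, hCu, Pi.star_apply,
        starRingEnd_apply, star_star]
      rw [Fintype.sum_prod_type, Finset.sum_comm]
      refine Finset.sum_congr rfl fun q _ => ?_
      simp only [Finset.sum_mul]
      refine Finset.sum_congr rfl fun j _ => by ring
    -- quadratic form equals trace (M0 * M0ᴴ)
    have hs : star u ⬝ᵥ (((A * Aᴴ) ⊗ₖ (B * Bᴴ)) *ᵥ u) = (M0 * M0ᴴ).trace := by
      rw [hPL, ← Matrix.mulVec_mulVec, Matrix.dotProduct_mulVec]
      have hsw := Matrix.star_mulVec ((A ⊗ₖ B)ᴴ) u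
      rw [Matrix.conjTranspose_conjTranspose] at hsw
      rw [← hsw, hy]
      simp only [Matrix.trace, Matrix.diag, Matrix.mul_apply, Matrix.conjTranspose_apply,
        dotProduct, Pi.star_apply, starRingEnd_apply, star_star]
      try rw [Fintype.sum_prod_type]
      try exact Finset.sum_congr rfl fun s _ => Finset.sum_congr rfl fun t _ => by ring
    -- the ρ-dot-product equals trace M0
    have hz : star x ⬝ᵥ (fun i : Fin N =>
        star (v k i) ⬝ᵥ (fun p : Fin m × Fin n => (B * Aᵀ) p.2 p.1)) = M0.trace := by
      have e1 : star x ⬝ᵥ (fun i : Fin N =>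
          star (v k i) ⬝ᵥ (fun p : Fin m × Fin n => (B * Aᵀ) p.2 p.1)) =
          star u ⬝ᵥ (fun p : Fin m × Fin n => (B * Aᵀ) p.2 p.1) := by
        simp only [dotProduct, Pi.star_apply, hu, Matrix.mulVec, hV, Matrix.of_apply,
          star_sum, star_mul', Finset.sum_mul, Finset.mul_sum]
        rw [Finset.sum_comm]
        refine Finset.sum_congr rfl fun p _ => Finset.sum_congr rfl fun i _ => by ring
      rw [e1, hM0, Matrix.trace_mul_cycle]
      set D : Matrix (Fin n) (Fin m) ℂ := B * Aᵀ with hD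
      simp only [Matrix.trace, Matrix.diag, Matrix.mul_apply, Matrix.conjTranspose_apply,
        dotProduct, Pi.star_apply, hCu, Matrix.of_apply]
      rw [Fintype.sum_prod_type, Finset.sum_comm]
      refine Finset.sum_congr rfl fun q _ => Finset.sum_congr rfl fun j _ => by ring
    -- rank bounds
    have hCuSpan : Cu ∈ Submodule.span ℂ (Set.range (C k)) := by
      have hrepr : Cu = ∑ i, x i • C k i := by
        ext q j
        simp only [hCu, Matrix.of_apply, hu, Matrix.mulVec, dotProduct, hV,
          Matrix.sum_apply, Matrix.smul_apply, hC, smul_eq_mul]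
        exact Finset.sum_congr rfl fun i _ => by ring
      rw [hrepr]
      exact Submodule.sum_mem _ fun i _ =>
        Submodule.smul_mem _ _ (Submodule.subset_span ⟨i, rfl⟩)
    have hCuRank : Cu.rank ≤ r k := by
      rw [hr k]
      refine le_csSup ⟨n, ?_⟩ ⟨Cu, hCuSpan, rfl⟩
      rintro t ⟨X, -, rfl⟩
      simpa using X.rank_le_card_height
    have hrankM0 : M0.rank ≤ min (min (A * Aᴴ).rank (B * Bᴴ).rank) (r k) := by
      refine le_min (le_min ?_ ?_) ?_
      · rw [Matrix.rank_self_mul_conjTranspose]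
        calc M0.rank ≤ (Aᵀ).rank := by
              rw [hM0, Matrix.mul_assoc]; exact Matrix.rank_mul_le_left _ _
          _ = A.rank := Matrix.rank_transpose A
      · rw [Matrix.rank_self_mul_conjTranspose, hM0]
        exact Matrix.rank_mul_le_right _ _
      · calc M0.rank ≤ (Cuᴴ * B).rank := by
              rw [hM0, Matrix.mul_assoc]; exact Matrix.rank_mul_le_right _ _
          _ ≤ (Cuᴴ).rank := Matrix.rank_mul_le_left _ _
          _ = Cu.rank := Matrix.rank_conjTranspose _
          _ ≤ r k := hCuRank
    -- put everything together
    rw [Matrix.sub_mulVec, dotProduct_sub, hGx, hs, smul_vecMulVec_quad, hz,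
      Complex.mul_conj, trace_mul_conjTranspose_self_eq]
    set Rk : ℕ := min (min (A * Aᴴ).rank (B * Bᴴ).rank) (r k) with hRk
    have hF : (0:ℝ) ≤ ∑ p : Fin β × Fin β, Complex.normSq (M0 p.1 p.2) :=
      Finset.sum_nonneg fun p _ => Complex.normSq_nonneg _
    have hcast : ((Rk : ℂ))⁻¹ * ((Complex.normSq M0.trace : ℝ) : ℂ) =
        ((((Rk : ℝ))⁻¹ * Complex.normSq M0.trace : ℝ) : ℂ) := by
      push_cast; ring
    rw [hcast, ← Complex.ofReal_sub, Complex.zero_le_real, sub_nonneg]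
    have hkey2 := normSq_trace_le β M0
    rcases Nat.eq_zero_or_pos Rk with h0 | hpos
    · rw [h0]; simpa using hF
    · rw [inv_mul_le_iff₀ (by exact_mod_cast hpos)]
      calc Complex.normSq M0.trace
          ≤ (M0.rank : ℝ) * ∑ p : Fin β × Fin β, Complex.normSq (M0 p.1 p.2) := hkey2
        _ ≤ (Rk : ℝ) * ∑ p : Fin β × Fin β, Complex.normSq (M0 p.1 p.2) :=
            mul_le_mul_of_nonneg_right (by exact_mod_cast hrankM0) hF
  constructor
  · rw [hMeq, ← Finset.sum_sub_distrib]
    exact Finset.sum_induction _ _ (fun a b ha hb => ha.add hb) Matrix.PosSemidef.zero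
      (fun k _ => hkey k)
  · exact Finset.sum_induction _ _ (fun a b ha hb => ha.add hb) Matrix.PosSemidef.zero
      (fun k _ => smul_vecMulVec_psd _ _)
end

section
/- Fix integers m, n, N, β ≥ 1. Let v_1, …, v_N ∈ ℂ^{mn}, not all zero, set C_i := vec^{−1}(v_i) ∈ ℂ^{n×m}, Y_{ij} := v_i v_j*, with induced product (A⋆B)_{ij} := tr((A⊗B) Y_{ij}*), and let 𝐫 := max{ rk X : X ∈ span_ℂ{C_1, …, C_N} } and r₀ := min(β, m, n, 𝐫). Then there exist A ∈ ℂ^{m×β} and B ∈ ℂ^{n×β} with rk(AA*) = rk(BB*) = r₀ (hence min(rk AA*, rk BB*, 𝐫) = r₀) and a vector u ∈ ℂ^N such that u*(AA* ⋆ BB*)u = r₀ and (1/r₀)·|ρ* u|² = r₀, where ρ ∈ ℂ^N has entries ρ_i := v_i* vec(BA^T). In particular, the coefficient 1/min(rk AA*, rk BB*, 𝐫) in the lower bound AA* ⋆ BB* ≽ (1/min(rk AA*, rk BB*, 𝐫)) ρρ* cannot be replaced by any larger constant uniformly over all A, B. -/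
open Matrix Kronecker ComplexOrder

private lemma sum_swap4 {α β γ δ M : Type*} [Fintype α] [Fintype β] [Fintype γ] [Fintype δ]
    [AddCommMonoid M] (f : α → β → γ → δ → M) :
    ∑ a, ∑ b, ∑ c, ∑ d, f a b c d = ∑ c, ∑ d, ∑ a, ∑ b, f a b c d :=
  calc ∑ a, ∑ b, ∑ c, ∑ d, f a b c d
      = ∑ a, ∑ c, ∑ b, ∑ d, f a b c d :=
        Finset.sum_congr rfl fun _ _ => Finset.sum_comm
    _ = ∑ c, ∑ a, ∑ b, ∑ d, f a b c d := Finset.sum_comm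
    _ = ∑ c, ∑ a, ∑ d, ∑ b, f a b c d :=
        Finset.sum_congr rfl fun _ _ => Finset.sum_congr rfl fun _ _ => Finset.sum_comm
    _ = ∑ c, ∑ d, ∑ a, ∑ b, f a b c d :=
        Finset.sum_congr rfl fun _ _ => Finset.sum_comm

private lemma sum_swap3 {α β γ M : Type*} [Fintype α] [Fintype β] [Fintype γ]
    [AddCommMonoid M] (f : α → β → γ → M) :
    ∑ a, ∑ b, ∑ c, f a b c = ∑ c, ∑ b, ∑ a, f a b c :=
  calc ∑ a, ∑ b, ∑ c, f a b c
      = ∑ a, ∑ c, ∑ b, f a b c := Finset.sum_congr rfl fun _ _ => Finset.sum_comm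
    _ = ∑ c, ∑ a, ∑ b, f a b c := Finset.sum_comm
    _ = ∑ c, ∑ b, ∑ a, f a b c := Finset.sum_congr rfl fun _ _ => Finset.sum_comm

private lemma dual_indep {ι n : Type*} [Fintype ι] [DecidableEq ι] [Fintype n]
    (d ψ : ι → n → ℂ) (h : ∀ k l, ψ k ⬝ᵥ d l = if k = l then 1 else 0) :
    LinearIndependent ℂ d := by
  rw [Fintype.linearIndependent_iff]
  intro g hg k
  have h2 : ψ k ⬝ᵥ (∑ i, g i • d i) = 0 := by rw [hg]; simp
  rw [dotProduct] at h2
  simp only [Finset.sum_apply, Pi.smul_apply, smul_eq_mul, Finset.mul_sum] at h2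
  rw [Finset.sum_comm] at h2
  have he : ∀ i, ∑ x, ψ k x * (g i * d i x) = g i * (ψ k ⬝ᵥ d i) := by
    intro i; rw [dotProduct, Finset.mul_sum]; apply Finset.sum_congr rfl; intros; ring
  simp only [he, h] at h2
  simpa using h2

private lemma rank_pos_of_ne_zero {n m : Type*} [Fintype n] [Fintype m] [DecidableEq m]
    (X : Matrix n m ℂ) (hX : X ≠ 0) : 1 ≤ X.rank := by
  rw [Nat.one_le_iff_ne_zero]
  intro h0
  apply hX
  rw [Matrix.rank, Submodule.finrank_eq_zero, LinearMap.range_eq_bot] at h0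
  ext p q
  have := congrFun (LinearMap.congr_fun h0 (Pi.single q 1)) p
  simpa [Matrix.mulVecLin_apply, Matrix.mulVec_single] using this

private lemma span_padded {n : Type*} [Fintype n] {r₀ β : ℕ} (hr : r₀ ≤ β)
    (d : Fin r₀ → n → ℂ) (hd : LinearIndependent ℂ d)
    (c : Fin β → n → ℂ)
    (hc : ∀ k : Fin β, c k = if h : (k : ℕ) < r₀ then d ⟨k, h⟩ else 0) :
    Module.finrank ℂ (Submodule.span ℂ (Set.range c)) = r₀ := by
  have hspan : Submodule.span ℂ (Set.range c) = Submodule.span ℂ (Set.range d) := by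
    apply le_antisymm
    · rw [Submodule.span_le]
      rintro _ ⟨k, rfl⟩
      rw [hc]
      split
      · exact Submodule.subset_span ⟨_, rfl⟩
      · simp
    · rw [Submodule.span_le]
      rintro _ ⟨l, rfl⟩
      have : d l = c ⟨(l : ℕ), lt_of_lt_of_le l.2 hr⟩ := by
        rw [hc]; simp [l.2]
      rw [this]
      exact Submodule.subset_span ⟨_, rfl⟩
  rw [hspan, finrank_span_eq_card hd, Fintype.card_fin]

private lemma quad_form {m' n' β' : Type*} [Fintype m'] [Fintype n'] [Fintype β']
    (P : Matrix m' β' ℂ) (Q : Matrix n' β' ℂ) (w : m' × n' → ℂ) :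
    star w ⬝ᵥ (((P * Pᴴ) ⊗ₖ (Q * Qᴴ)) *ᵥ w)
      = ∑ k : β', ∑ l : β',
          star (∑ x : m' × n', w x * star (P x.1 k) * star (Q x.2 l)) *
          (∑ x : m' × n', w x * star (P x.1 k) * star (Q x.2 l)) := by
  have lhs : star w ⬝ᵥ (((P * Pᴴ) ⊗ₖ (Q * Qᴴ)) *ᵥ w)
      = ∑ x : m' × n', ∑ y : m' × n', ∑ k : β', ∑ l : β',
          star (w x) * (P x.1 k * star (P y.1 k)) * (Q x.2 l * star (Q y.2 l)) * w y := by
    simp only [dotProduct, mulVec, kroneckerMap_apply, mul_apply, conjTranspose_apply,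
      Pi.star_apply, dotProduct]
    apply Finset.sum_congr rfl; intro x _
    rw [Finset.mul_sum]
    apply Finset.sum_congr rfl; intro y _
    simp only [Finset.mul_sum, Finset.sum_mul]
    rw [Finset.sum_comm]
    apply Finset.sum_congr rfl; intro k _
    apply Finset.sum_congr rfl; intro l _
    ring
  rw [lhs, sum_swap4]
  apply Finset.sum_congr rfl; intro k _
  apply Finset.sum_congr rfl; intro l _
  rw [star_sum, Finset.sum_mul]
  apply Finset.sum_congr rfl; intro x _
  rw [Finset.mul_sum]
  apply Finset.sum_congr rfl; intro y _
  simp only [star_mul', star_star]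
  ring

private lemma trace_vmv {ι : Type*} [Fintype ι] (M : Matrix ι ι ℂ) (x y : ι → ℂ) :
    Matrix.trace (M * (vecMulVec x (star y))ᴴ) = star x ⬝ᵥ (M *ᵥ y) := by
  simp only [Matrix.trace, Matrix.diag, mul_apply, conjTranspose_apply, vecMulVec_apply,
    Pi.star_apply, dotProduct, mulVec, star_mul', star_star, Finset.mul_sum]
  apply Finset.sum_congr rfl; intro a _
  apply Finset.sum_congr rfl; intro b _
  ring

private lemma collect {ι κ : Type*} [Fintype ι] [Fintype κ] (K : Matrix κ κ ℂ)
    (v : ι → κ → ℂ) (u : ι → ℂ) :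
    star u ⬝ᵥ ((Matrix.of fun i j => Matrix.trace (K * (vecMulVec (v i) (star (v j)))ᴴ)) *ᵥ u)
      = star (fun t => ∑ i, u i * v i t) ⬝ᵥ (K *ᵥ fun t => ∑ i, u i * v i t) := by
  have lhs : star u ⬝ᵥ ((Matrix.of fun i j =>
        Matrix.trace (K * (vecMulVec (v i) (star (v j)))ᴴ)) *ᵥ u)
      = ∑ i, ∑ j, ∑ a, ∑ b, star (u i) * star (v i a) * K a b * v j b * u j := by
    simp only [dotProduct, mulVec, Matrix.of_apply, Pi.star_apply, trace_vmv, dotProduct,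
      Pi.star_apply, Finset.mul_sum, Finset.sum_mul]
    apply Finset.sum_congr rfl; intro i _
    apply Finset.sum_congr rfl; intro j _
    apply Finset.sum_congr rfl; intro a _
    apply Finset.sum_congr rfl; intro b _
    ring
  have rhs : star (fun t => ∑ i, u i * v i t) ⬝ᵥ (K *ᵥ fun t => ∑ i, u i * v i t)
      = ∑ a, ∑ b, ∑ i, ∑ j, star (u i) * star (v i a) * K a b * v j b * u j := by
    simp only [dotProduct, mulVec, Pi.star_apply, star_sum, star_mul']
    apply Finset.sum_congr rfl; intro a _
    rw [Finset.sum_mul_sum]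
    rw [Finset.sum_comm]
    apply Finset.sum_congr rfl; intro b _
    apply Finset.sum_congr rfl; intro i _
    simp only [Finset.mul_sum]
    apply Finset.sum_congr rfl; intro j _
    ring
  rw [lhs, rhs,
    sum_swap4 (f := fun (i j : ι) (a b : κ) => star (u i) * star (v i a) * K a b * v j b * u j)]

private lemma rho_collect {ι m' n' β' : Type*} [Fintype ι] [Fintype m'] [Fintype n'] [Fintype β']
    (A : Matrix m' β' ℂ) (B : Matrix n' β' ℂ) (v : ι → m' × n' → ℂ) (u : ι → ℂ) :
    (star fun i => star (v i) ⬝ᵥ (fun p : m' × n' => (B * Aᵀ) p.2 p.1)) ⬝ᵥ u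
      = ∑ k, ∑ x : m' × n', (∑ i, u i * v i x) * star (A x.1 k) * star (B x.2 k) := by
  have lhs : (star fun i => star (v i) ⬝ᵥ (fun p : m' × n' => (B * Aᵀ) p.2 p.1)) ⬝ᵥ u
      = ∑ i, ∑ x : m' × n', ∑ k, u i * v i x * star (A x.1 k) * star (B x.2 k) := by
    simp only [dotProduct, Pi.star_apply, star_sum, star_mul', star_star, mul_apply,
      transpose_apply, Finset.sum_mul, Finset.mul_sum]
    apply Finset.sum_congr rfl; intro i _
    apply Finset.sum_congr rfl; intro x _
    apply Finset.sum_congr rfl; intro k _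
    ring
  rw [lhs, sum_swap3]
  apply Finset.sum_congr rfl; intro k _
  apply Finset.sum_congr rfl; intro x _
  rw [Finset.sum_mul, Finset.sum_mul]

private lemma count_lemma {β r₀ : ℕ} (h : r₀ ≤ β) :
    ∑ k : Fin β, (if (k : ℕ) < r₀ then (1 : ℂ) else 0) = (r₀ : ℂ) := by
  rw [Fin.sum_univ_eq_sum_range (fun i => if i < r₀ then (1 : ℂ) else 0)]
  rw [← Finset.sum_filter]
  have he : Finset.filter (fun i => i < r₀) (Finset.range β) = Finset.range r₀ := by
    ext i; simp only [Finset.mem_filter, Finset.mem_range]; omega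
  rw [he, Finset.sum_const, Finset.card_range]
  simp

/-- sharpness of the coefficient `1/min(rk AA*, rk BB*, 𝐫)` for a
rank-one product `⋆` given by `Y_{ij} = v_i v_j*`: with
`r₀ = min(β, m, n, 𝐫)` there exist `A, B` with `rk AA* = rk BB* = r₀`
(hence `min(rk AA*, rk BB*, 𝐫) = r₀`) and a vector `u` such that
`u*(AA* ⋆ BB*)u = r₀` and `(1/r₀)|ρ* u|² = r₀`. -/
theorem general_prod_sharp (m n N β : ℕ)
    (hm : 1 ≤ m) (hn : 1 ≤ n) (hN : 1 ≤ N) (hβ : 1 ≤ β)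
    (v : Fin N → Fin m × Fin n → ℂ) (hv : v ≠ 0)
    (C : Fin N → Matrix (Fin n) (Fin m) ℂ) (hC : ∀ i p q, C i p q = v i (q, p))
    (rstar : ℕ)
    (hrstar : rstar =
      sSup {t : ℕ | ∃ X ∈ Submodule.span ℂ (Set.range C), Matrix.rank X = t})
    (r₀ : ℕ) (hr₀ : r₀ = min β (min m (min n rstar))) :
    ∃ (A : Matrix (Fin m) (Fin β) ℂ) (B : Matrix (Fin n) (Fin β) ℂ) (u : Fin N → ℂ),
      (A * Aᴴ).rank = r₀ ∧ (B * Bᴴ).rank = r₀ ∧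
      min (min (A * Aᴴ).rank (B * Bᴴ).rank) rstar = r₀ ∧
      star u ⬝ᵥ ((Matrix.of fun i j : Fin N =>
          Matrix.trace (((A * Aᴴ) ⊗ₖ (B * Bᴴ)) *
            (vecMulVec (v i) (star (v j)))ᴴ)).mulVec u) = (r₀ : ℂ) ∧
      ((r₀ : ℂ))⁻¹ *
          ((‖(star fun i : Fin N =>
                star (v i) ⬝ᵥ (fun p : Fin m × Fin n => (B * Aᵀ) p.2 p.1)) ⬝ᵥ u‖ ^ 2 : ℝ) : ℂ)
        = (r₀ : ℂ) := by
  classical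
  have hSne : Set.Nonempty {t : ℕ | ∃ X ∈ Submodule.span ℂ (Set.range C), Matrix.rank X = t} :=
    ⟨0, 0, Submodule.zero_mem _, Matrix.rank_zero⟩
  have hSbdd : BddAbove {t : ℕ | ∃ X ∈ Submodule.span ℂ (Set.range C), Matrix.rank X = t} := by
    refine ⟨m, ?_⟩
    rintro t ⟨X, -, rfl⟩
    simpa using Matrix.rank_le_card_width X
  have hmem : rstar ∈ {t : ℕ | ∃ X ∈ Submodule.span ℂ (Set.range C), Matrix.rank X = t} := by
    rw [hrstar]; exact Nat.sSup_mem hSne hSbdd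
  obtain ⟨X, hXspan, hXrank⟩ := hmem
  obtain ⟨i₀, hi₀⟩ : ∃ i, v i ≠ 0 := Function.ne_iff.mp hv
  have hCi : C i₀ ≠ 0 := by
    intro h
    apply hi₀
    funext x
    have := congrFun (congrFun h x.2) x.1
    simpa [hC] using this
  have h1r : 1 ≤ rstar := by
    rw [hrstar]
    exact le_trans (rank_pos_of_ne_zero _ hCi)
      (le_csSup hSbdd ⟨C i₀, Submodule.subset_span ⟨i₀, rfl⟩, rfl⟩)
  have hr₀β : r₀ ≤ β := by omega
  have hr₀r : r₀ ≤ rstar := by omega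
  have h1r₀ : 1 ≤ r₀ := by omega
  obtain ⟨u, hu⟩ := (Submodule.mem_span_range_iff_exists_fun ℂ).mp hXspan
  have hfr : r₀ ≤ Module.finrank ℂ (LinearMap.range X.mulVecLin) := by
    rw [show Module.finrank ℂ (LinearMap.range X.mulVecLin) = X.rank from rfl, hXrank]
    exact hr₀r
  set V := LinearMap.range X.mulVecLin with hV
  let bas : Module.Basis (Fin (Module.finrank ℂ V)) ℂ V := Module.finBasis ℂ V
  let wfam : Fin r₀ → (Fin n → ℂ) := fun k => (bas (Fin.castLE hfr k) : Fin n → ℂ)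
  have hwind : LinearIndependent ℂ wfam := by
    have h1 : LinearIndependent ℂ (bas ∘ Fin.castLE hfr) :=
      bas.linearIndependent.comp _ (Fin.castLE_injective hfr)
    have h2 := h1.map' V.subtype (Submodule.ker_subtype V)
    exact h2
  have hy0 : ∀ k, ∃ yk, X *ᵥ yk = wfam k := by
    intro k
    obtain ⟨yk, hyk⟩ := (bas (Fin.castLE hfr k)).2
    exact ⟨yk, hyk⟩
  choose y hy using hy0
  let T : (Fin r₀ → ℂ) →ₗ[ℂ] (Fin n → ℂ) := Fintype.linearCombination ℂ wfam
  have hTker : LinearMap.ker T = ⊥ := by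
    rw [LinearMap.ker_eq_bot']
    intro c hc
    funext k
    exact Fintype.linearIndependent_iff.mp hwind c
      (by simpa [T, Fintype.linearCombination_apply] using hc) k
  obtain ⟨g, hg⟩ := T.exists_leftInverse_of_injective hTker
  let z : Fin r₀ → (Fin n → ℂ) := fun k p => g (fun j => if p = j then 1 else 0) k
  have hδ : ∀ k l : Fin r₀, z k ⬝ᵥ (X *ᵥ y l) = if k = l then 1 else 0 := by
    intro k l
    rw [hy l]
    have h1 : T (Pi.single l 1) = wfam l := by
      simp [T, Fintype.linearCombination_apply, Pi.single_apply]
    have h2 : g (wfam l) = Pi.single l 1 := by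
      rw [← h1]; exact LinearMap.congr_fun hg _
    have h3 := LinearMap.pi_apply_eq_sum_univ g (wfam l)
    have h4 : g (wfam l) k = ∑ p, wfam l p * z k p := by
      rw [h3]; simp only [Finset.sum_apply, Pi.smul_apply, smul_eq_mul]; rfl
    have h5 : z k ⬝ᵥ wfam l = g (wfam l) k := by
      rw [h4, dotProduct]
      apply Finset.sum_congr rfl; intros; ring
    rw [h5, h2, Pi.single_apply]
  set A : Matrix (Fin m) (Fin β) ℂ :=
    Matrix.of fun a k => if h : (k : ℕ) < r₀ then star (y ⟨k, h⟩ a) else 0 with hA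
  set B : Matrix (Fin n) (Fin β) ℂ :=
    Matrix.of fun b k => if h : (k : ℕ) < r₀ then star (z ⟨k, h⟩ b) else 0 with hB
  have hXw : ∀ x : Fin m × Fin n, (∑ i, u i * v i x) = X x.2 x.1 := by
    intro x
    rw [← hu]
    simp only [Finset.sum_apply, Matrix.sum_apply, Pi.smul_apply, Matrix.smul_apply,
      smul_eq_mul, hC]
  have hArank : A.rank = r₀ := by
    rw [Matrix.rank_eq_finrank_span_cols]
    refine span_padded hr₀β (fun l a => star (y l a)) ?_ Aᵀ ?_
    · refine dual_indep _ (fun k => star ((z k) ᵥ* X)) ?_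
      intro k l
      have he : star ((z k) ᵥ* X) ⬝ᵥ (fun a => star (y l a)) = star (z k ⬝ᵥ (X *ᵥ y l)) := by
        rw [dotProduct_mulVec]
        simp only [dotProduct, star_sum, star_mul', Pi.star_apply]
      rw [he, hδ]
      split <;> simp
    · intro k
      funext a
      by_cases h : (k : ℕ) < r₀ <;> simp [hA, h]
  have hBrank : B.rank = r₀ := by
    rw [Matrix.rank_eq_finrank_span_cols]
    refine span_padded hr₀β (fun l b => star (z l b)) ?_ Bᵀ ?_
    · refine dual_indep _ (fun k => star (X *ᵥ y k)) ?_
      intro k l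
      have he : star (X *ᵥ y k) ⬝ᵥ (fun b => star (z l b)) = star (z l ⬝ᵥ (X *ᵥ y k)) := by
        simp only [dotProduct, star_sum, star_mul', Pi.star_apply]
        apply Finset.sum_congr rfl; intros; ring
      rw [he, hδ]
      by_cases hkl : k = l
      · subst hkl; simp
      · simp [hkl, Ne.symm hkl]
    · intro k
      funext b
      by_cases h : (k : ℕ) < r₀ <;> simp [hB, h]
  have key : ∀ k l : Fin β,
      (∑ x : Fin m × Fin n, (∑ i, u i * v i x) * star (A x.1 k) * star (B x.2 l))
        = if (k : ℕ) < r₀ ∧ k = l then 1 else 0 := by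
    intro k l
    by_cases hk : (k : ℕ) < r₀
    · by_cases hl : (l : ℕ) < r₀
      · have heq : (∑ x : Fin m × Fin n, (∑ i, u i * v i x) * star (A x.1 k) * star (B x.2 l))
            = z ⟨l, hl⟩ ⬝ᵥ (X *ᵥ y ⟨k, hk⟩) := by
          rw [Fintype.sum_prod_type, Finset.sum_comm, dotProduct]
          apply Finset.sum_congr rfl; intro b _
          rw [mulVec, dotProduct, Finset.mul_sum]
          apply Finset.sum_congr rfl; intro a _
          rw [hXw (a, b)]
          simp only [hA, hB, Matrix.of_apply, dif_pos hk, dif_pos hl, star_star]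
          ring
        rw [heq, hδ]
        by_cases hkl : (k : Fin β) = l
        · subst hkl; simp [hk]
        · have hne : (⟨l, hl⟩ : Fin r₀) ≠ ⟨k, hk⟩ := by
            intro h
            apply hkl
            have := congrArg Fin.val h
            simp only at this
            exact Fin.ext this.symm
          simp [hne, hkl, hk]
      · have hkl : k ≠ l := by intro h; apply hl; rw [← h]; exact hk
        have hz : ∀ x : Fin m × Fin n,
            (∑ i, u i * v i x) * star (A x.1 k) * star (B x.2 l) = 0 := by
          intro x; simp [hB, dif_neg hl]
        rw [Finset.sum_eq_zero (fun x _ => hz x), if_neg (fun hcon => hkl hcon.2)]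
    · have hz : ∀ x : Fin m × Fin n,
          (∑ i, u i * v i x) * star (A x.1 k) * star (B x.2 l) = 0 := by
        intro x; simp [hA, dif_neg hk]
      rw [Finset.sum_eq_zero (fun x _ => hz x), if_neg (fun hcon => hk hcon.1)]
  refine ⟨A, B, u, ?_, ?_, ?_, ?_, ?_⟩
  · rw [Matrix.rank_self_mul_conjTranspose, hArank]
  · rw [Matrix.rank_self_mul_conjTranspose, hBrank]
  · rw [Matrix.rank_self_mul_conjTranspose, Matrix.rank_self_mul_conjTranspose,
      hArank, hBrank]
    simp [min_eq_left hr₀r]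
  · rw [show ((Matrix.of fun i j : Fin N =>
        Matrix.trace (((A * Aᴴ) ⊗ₖ (B * Bᴴ)) * (vecMulVec (v i) (star (v j)))ᴴ)).mulVec u)
        = ((Matrix.of fun i j : Fin N =>
        Matrix.trace (((A * Aᴴ) ⊗ₖ (B * Bᴴ)) * (vecMulVec (v i) (star (v j)))ᴴ)) *ᵥ u) from rfl,
      collect ((A * Aᴴ) ⊗ₖ (B * Bᴴ)) v u, quad_form A B (fun t => ∑ i, u i * v i t)]
    have hterm : ∀ k l : Fin β,
        star (∑ x : Fin m × Fin n, (∑ i, u i * v i x) * star (A x.1 k) * star (B x.2 l)) *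
          (∑ x : Fin m × Fin n, (∑ i, u i * v i x) * star (A x.1 k) * star (B x.2 l))
        = if (k : ℕ) < r₀ ∧ k = l then 1 else 0 := by
      intro k l
      rw [key k l]
      split <;> simp
    simp only [hterm]
    have hinner : ∀ k : Fin β,
        (∑ l : Fin β, if (k : ℕ) < r₀ ∧ k = l then (1 : ℂ) else 0)
          = if (k : ℕ) < r₀ then 1 else 0 := by
      intro k
      by_cases hk : (k : ℕ) < r₀ <;> simp [hk]
    rw [Finset.sum_congr rfl fun k _ => hinner k, count_lemma hr₀β]
  · rw [rho_collect A B v u]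
    have hdiag : ∀ k : Fin β,
        (∑ x : Fin m × Fin n, (∑ i, u i * v i x) * star (A x.1 k) * star (B x.2 k))
          = if (k : ℕ) < r₀ then 1 else 0 := by
      intro k; rw [key k k]; simp
    rw [Finset.sum_congr rfl fun k _ => hdiag k, count_lemma hr₀β]
    rw [Complex.norm_natCast]
    push_cast
    rw [sq]
    field_simp
end

section
/- Fix integers m, n, N, β ≥ 1. Let v_1, …, v_N ∈ ℂ^{mn}, set C_i := vec^{−1}(v_i) ∈ ℂ^{n×m} and Y_{ij} := v_i v_j*, with induced product (A⋆B)_{ij} := tr((A⊗B) Y_{ij}*). Then for all A ∈ ℂ^{m×β} and B ∈ ℂ^{n×β} and all 1 ≤ i, j ≤ N, one has (AA* ⋆ BB*)_{ij} = tr( (B* C_j Ā) (B* C_i Ā)* ), i.e., AA* ⋆ BB* is the Gram matrix of the matrices B* C_i Ā ∈ ℂ^{β×β} with respect to the Frobenius inner product ⟨X, Z⟩ := tr(X Z*). -/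
open Matrix Kronecker ComplexOrder

private lemma sum_reorder6 {M : Type*} [AddCommMonoid M] {α β γ δ ε ζ : Type*}
    [Fintype α] [Fintype β] [Fintype γ] [Fintype δ] [Fintype ε] [Fintype ζ]
    (f : α → β → γ → δ → ε → ζ → M) :
    (∑ a, ∑ b, ∑ c, ∑ d, ∑ e, ∑ g, f a b c d e g)
      = ∑ c, ∑ d, ∑ e, ∑ g, ∑ a, ∑ b, f a b c d e g := by
  have h1 : (∑ x : α × β × γ × δ × ε × ζ,
        f x.1 x.2.1 x.2.2.1 x.2.2.2.1 x.2.2.2.2.1 x.2.2.2.2.2)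
      = ∑ a, ∑ b, ∑ c, ∑ d, ∑ e, ∑ g, f a b c d e g := by
    simp [Fintype.sum_prod_type]
  have h2 : (∑ y : γ × δ × ε × ζ × α × β,
        f y.2.2.2.2.1 y.2.2.2.2.2 y.1 y.2.1 y.2.2.1 y.2.2.2.1)
      = ∑ c, ∑ d, ∑ e, ∑ g, ∑ a, ∑ b, f a b c d e g := by
    simp [Fintype.sum_prod_type]
  rw [← h1, ← h2]
  exact Fintype.sum_equiv
    ⟨fun x => (x.2.2.1, x.2.2.2.1, x.2.2.2.2.1, x.2.2.2.2.2, x.1, x.2.1),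
     fun y => (y.2.2.2.2.1, y.2.2.2.2.2, y.1, y.2.1, y.2.2.1, y.2.2.2.1),
     fun _ => rfl, fun _ => rfl⟩ _ _ (fun _ => rfl)

/-- for the rank-one product `⋆` given by `Y_{ij} = v_i v_j*`,
`(AA* ⋆ BB*)_{ij} = tr((B* C_j Ā)(B* C_i Ā)*)`, i.e. `AA* ⋆ BB*` is the Gram
matrix of the matrices `B* C_i Ā` in the Frobenius inner product.  Here
`C_i = vec⁻¹(v_i)` and `Ā = A.map star` is the entrywise conjugate. -/
theorem star_prod_gram_identity (m n N β : ℕ)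
    (hm : 1 ≤ m) (hn : 1 ≤ n) (hN : 1 ≤ N) (hβ : 1 ≤ β)
    (v : Fin N → Fin m × Fin n → ℂ)
    (C : Fin N → Matrix (Fin n) (Fin m) ℂ) (hC : ∀ i p q, C i p q = v i (q, p))
    (A : Matrix (Fin m) (Fin β) ℂ) (B : Matrix (Fin n) (Fin β) ℂ) (i j : Fin N) :
    Matrix.trace (((A * Aᴴ) ⊗ₖ (B * Bᴴ)) * (vecMulVec (v i) (star (v j)))ᴴ)
      = Matrix.trace ((Bᴴ * C j * A.map star) * (Bᴴ * C i * A.map star)ᴴ) := by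
  simp only [trace, Matrix.mul_apply, diag_apply, conjTranspose_apply, kroneckerMap_apply,
    vecMulVec_apply, Pi.star_apply, hC, Matrix.map_apply, Fintype.sum_prod_type,
    Finset.sum_mul, Finset.mul_sum, star_mul', star_star, star_sum]
  rw [sum_reorder6 (fun (a : Fin β) (b : Fin β) (c : Fin m) (d : Fin n) (e : Fin m) (g : Fin n) =>
    star (B g a) * v j (e, g) * star (A e b) * (B d a * star (v i (c, d)) * A c b))]
  refine Finset.sum_congr rfl fun _ _ => Finset.sum_congr rfl fun _ _ =>
    Finset.sum_congr rfl fun _ _ => Finset.sum_congr rfl fun _ _ =>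
    Finset.sum_congr rfl fun _ _ => Finset.sum_congr rfl fun _ _ => ?_
  ring
end
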